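/- arXiv:2009.09426 — 6 statements merged into one kernel-verified Lean document; each statement's English description precedes it below -/
import Mathlib

section
/- Let H be a bigraph (a graph with a designated bipartition (V1(H), V2(H))) and let ε>0. Then there exists δ>0 with the following property: for every bigraph G that does not bicontain H (i.e., contains no induced sub-bigraph isomorphic to H respecting the bipartition) and has V1(G), V2(G) nonempty, there exist A1 ⊆ V1(G) and A2 ⊆ V2(G) with |Ai| ≥ δ|Vi(G)| for i=1,2, such that either every vertex of A1 has fewer than ε|A2| neighbours in A2 and every vertex of A2 has fewer than ε|A1| neighbours in A1, or every vertex of A1 has more than (1−ε)|A2| neighbours in A2 and every vertex of A2 has more than (1−ε)|A1| neighbours in A1. -/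
/-- A *bigraph*: a graph with a designated bipartition `(V1, V2)`;
adjacency `adj x y` is interpreted for `x ∈ V1`, `y ∈ V2`. -/
structure Bigraph where
  V1 : Finset ℕ
  V2 : Finset ℕ
  disj : Disjoint V1 V2
  adj : ℕ → ℕ → Bool

namespace Bigraph

/-- `G` bicontains `H`: an injective, side- and (non-)adjacency-preserving embedding. -/
def Bicontains (G H : Bigraph) : Prop :=
  ∃ f : ℕ → ℕ, Set.InjOn f ↑(H.V1 ∪ H.V2) ∧
    (∀ u ∈ H.V1, f u ∈ G.V1) ∧ (∀ v ∈ H.V2, f v ∈ G.V2) ∧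
    ∀ u ∈ H.V1, ∀ v ∈ H.V2, H.adj u v = G.adj (f u) (f v)

/-- Number of neighbours of a `V1`-vertex `x` inside `Y ⊆ V2`. -/
def deg1 (G : Bigraph) (x : ℕ) (Y : Finset ℕ) : ℕ :=
  (Y.filter fun y => G.adj x y = true).card

/-- Number of neighbours of a `V2`-vertex `y` inside `X ⊆ V1`. -/
def deg2 (G : Bigraph) (y : ℕ) (X : Finset ℕ) : ℕ :=
  (X.filter fun x => G.adj x y = true).card

/-- Number of edges between `X ⊆ V1` and `Y ⊆ V2`. -/
def edgeCount (G : Bigraph) (X Y : Finset ℕ) : ℕ :=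
  ∑ x ∈ X, (Y.filter fun y => G.adj x y = true).card

/-- `Z1 ⊆ V1`, `Z2 ⊆ V2` are anticomplete: no edges between them. -/
def Anticomplete (G : Bigraph) (Z1 Z2 : Finset ℕ) : Prop :=
  ∀ x ∈ Z1, ∀ y ∈ Z2, G.adj x y = false

/-- `Z1 ⊆ V1`, `Z2 ⊆ V2` are complete to each other. -/
def Complete (G : Bigraph) (Z1 Z2 : Finset ℕ) : Prop :=
  ∀ x ∈ Z1, ∀ y ∈ Z2, G.adj x y = true

/-- The underlying simple graph of a bigraph. -/
def underlying (G : Bigraph) : SimpleGraph ℕ where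
  Adj x y := (x ∈ G.V1 ∧ y ∈ G.V2 ∧ G.adj x y = true) ∨
             (y ∈ G.V1 ∧ x ∈ G.V2 ∧ G.adj y x = true)
  symm := ⟨fun x y h => by tauto⟩
  loopless := ⟨fun x h => by
    rcases h with ⟨h1, h2, _⟩ | ⟨h1, h2, _⟩ <;>
      exact (Finset.disjoint_left.mp G.disj h1) h2⟩

/-- A forest bigraph: the underlying graph is acyclic. -/
def IsForest (G : Bigraph) : Prop := G.underlying.IsAcyclic

/-- `G` is `ε`-coherent. -/
def Coherent (G : Bigraph) (ε : ℝ) : Prop :=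
  (∀ x ∈ G.V1, (G.deg1 x G.V2 : ℝ) < ε * G.V2.card) ∧
  (∀ y ∈ G.V2, (G.deg2 y G.V1 : ℝ) < ε * G.V1.card) ∧
  ¬ ∃ Z1 Z2 : Finset ℕ, Z1 ⊆ G.V1 ∧ Z2 ⊆ G.V2 ∧
      ε * G.V1.card ≤ (Z1.card : ℝ) ∧ ε * G.V2.card ≤ (Z2.card : ℝ) ∧
      G.Anticomplete Z1 Z2

end Bigraph

open Finset

def NoPair (G : Bigraph) (ε δ : ℝ) : Prop :=
  ∀ A1 A2 : Finset ℕ, A1 ⊆ G.V1 → A2 ⊆ G.V2 →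
    δ * (G.V1.card : ℝ) ≤ A1.card → δ * (G.V2.card : ℝ) ≤ A2.card →
    ¬(((∀ x ∈ A1, (G.deg1 x A2 : ℝ) < ε * (A2.card : ℝ)) ∧
       (∀ y ∈ A2, (G.deg2 y A1 : ℝ) < ε * (A1.card : ℝ))) ∨
      ((∀ x ∈ A1, (1 - ε) * (A2.card : ℝ) < (G.deg1 x A2 : ℝ)) ∧
       (∀ y ∈ A2, (1 - ε) * (A1.card : ℝ) < (G.deg2 y A1 : ℝ))))

lemma bg_count_comm (B D : Finset ℕ) (p : ℕ → ℕ → Prop) [∀ y z, Decidable (p y z)] :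
    ∑ y ∈ B, (D.filter fun z => p y z).card = ∑ z ∈ D, (B.filter fun y => p y z).card := by
  simp only [Finset.card_filter]
  exact Finset.sum_comm

lemma bg_one_le_pow {a : ℝ} (ha : 1 ≤ a) : ∀ m : ℕ, 1 ≤ a^m := by
  intro m
  induction m with
  | zero => simp
  | succ n ihn =>
    rw [pow_succ]
    nlinarith

lemma bg_filter_split (s : Finset ℕ) (p : ℕ → Bool) :
    (s.filter fun z => p z = true).card + (s.filter fun z => p z = false).card = s.card := by
  have := Finset.card_filter_add_card_filter_not (s := s) (p := fun z => p z = true)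
  simpa [Bool.not_eq_true] using this

lemma KP1 (G : Bigraph) (ε δ : ℝ) (hε : 0 < ε) (hδ : 0 < δ)
    (hc1 : 0 < (G.V1.card : ℝ)) (NP : NoPair G ε δ) (b : Bool) (B D : Finset ℕ)
    (hB : B ⊆ G.V1) (hD : D ⊆ G.V2)
    (hrow : ∀ y ∈ B, ((D.filter fun z => G.adj y z = b).card : ℝ) < ε / 2 * D.card)
    (hBc : δ * G.V1.card ≤ B.card) (hDc : 2 * δ * G.V2.card ≤ D.card) : False := by
  classical
  have hBpos : 0 < (B.card : ℝ) := lt_of_lt_of_le (by positivity) hBc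
  have hBne : B.Nonempty := Finset.card_pos.mp (by exact_mod_cast hBpos)
  set D' := D.filter (fun z => ((B.filter fun y => G.adj y z = b).card : ℝ) < ε * B.card)
    with hD'def
  -- total count bound
  have hsum : ∑ z ∈ D, ((B.filter fun y => G.adj y z = b).card)
      = ∑ y ∈ B, ((D.filter fun z => G.adj y z = b).card) :=
    (bg_count_comm B D (fun y z => G.adj y z = b)).symm
  have hsumR : (∑ z ∈ D, (((B.filter fun y => G.adj y z = b).card : ℝ)))
      < ε / 2 * D.card * B.card := by
    have h1 : (∑ y ∈ B, ((D.filter fun z => G.adj y z = b).card : ℝ))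
        < ∑ _y ∈ B, ε / 2 * (D.card : ℝ) :=
      Finset.sum_lt_sum_of_nonempty hBne (fun y hy => hrow y hy)
    have h2 : (∑ _y ∈ B, ε / 2 * (D.card : ℝ)) = ε / 2 * D.card * B.card := by
      rw [Finset.sum_const, nsmul_eq_mul]; ring
    have h3 : (∑ z ∈ D, (((B.filter fun y => G.adj y z = b).card : ℝ)))
        = (∑ y ∈ B, ((D.filter fun z => G.adj y z = b).card : ℝ)) := by
      exact_mod_cast congrArg (Nat.cast : ℕ → ℝ) hsum
    rw [h3]; linarith
  set E := D \ D' with hEdef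
  have hEbound : ∀ z ∈ E, ε * B.card ≤ ((B.filter fun y => G.adj y z = b).card : ℝ) := by
    intro z hz
    rcases Finset.mem_sdiff.mp hz with ⟨hzD, hzD'⟩
    by_contra h
    push_neg at h
    exact hzD' (Finset.mem_filter.mpr ⟨hzD, h⟩)
  have hE : (E.card : ℝ) * (ε * B.card)
      ≤ ∑ z ∈ D, ((B.filter fun y => G.adj y z = b).card : ℝ) := by
    calc (E.card : ℝ) * (ε * B.card) = ∑ _z ∈ E, ε * (B.card : ℝ) := by
          rw [Finset.sum_const, nsmul_eq_mul]
      _ ≤ ∑ z ∈ E, ((B.filter fun y => G.adj y z = b).card : ℝ) := Finset.sum_le_sum hEbound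
      _ ≤ ∑ z ∈ D, ((B.filter fun y => G.adj y z = b).card : ℝ) :=
          Finset.sum_le_sum_of_subset_of_nonneg (Finset.sdiff_subset)
            (fun _ _ _ => by positivity)
  have hEcard : (E.card : ℝ) < D.card / 2 := by
    have hεB : 0 < ε * B.card := mul_pos hε hBpos
    have h2 : (E.card : ℝ) * (ε * B.card) < (D.card / 2) * (ε * B.card) := by
      calc (E.card : ℝ) * (ε * B.card) ≤ _ := hE
        _ < ε / 2 * D.card * B.card := hsumR
        _ = (D.card / 2) * (ε * B.card) := by ring
    exact lt_of_mul_lt_mul_right h2 (le_of_lt hεB)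
  have hD'sub : D' ⊆ D := Finset.filter_subset _ _
  have hD'card : (D.card : ℝ) < 2 * D'.card := by
    have h0 : E.card = D.card - D'.card := Finset.card_sdiff_of_subset hD'sub
    have hle : D'.card ≤ D.card := Finset.card_le_card hD'sub
    have h1 : (E.card : ℝ) = (D.card : ℝ) - D'.card := by
      rw [h0, Nat.cast_sub hle]
    linarith
  have hD'c : δ * G.V2.card ≤ (D'.card : ℝ) := by linarith
  refine NP B D' hB (hD'sub.trans hD) hBc hD'c ?_
  cases b with
  | true =>
    left
    constructor
    · intro x hx
      have hsub : (D'.filter fun z => G.adj x z = true) ⊆ (D.filter fun z => G.adj x z = true) :=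
        Finset.filter_subset_filter _ hD'sub
      have h1 : (G.deg1 x D' : ℝ) ≤ ((D.filter fun z => G.adj x z = true).card : ℝ) := by
        exact_mod_cast Finset.card_le_card hsub
      have h2 := hrow x hx
      have : ε / 2 * (D.card : ℝ) < ε * D'.card := by nlinarith
      calc (G.deg1 x D' : ℝ) ≤ _ := h1
        _ < ε / 2 * D.card := h2
        _ < ε * D'.card := this
    · intro z hz
      have h2 := (Finset.mem_filter.mp hz).2
      exact h2
  | false =>
    right
    constructor
    · intro x hx
      have hsplit := bg_filter_split D' (fun z => G.adj x z)
      have hsub : (D'.filter fun z => G.adj x z = false) ⊆ (D.filter fun z => G.adj x z = false) :=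
        Finset.filter_subset_filter _ hD'sub
      have h1 : ((D'.filter fun z => G.adj x z = false).card : ℝ) < ε / 2 * D.card :=
        lt_of_le_of_lt (by exact_mod_cast Finset.card_le_card hsub) (hrow x hx)
      have h3 : (G.deg1 x D' : ℝ)
          = (D'.card : ℝ) - ((D'.filter fun z => G.adj x z = false).card : ℝ) := by
        have hn : (G.deg1 x D') + (D'.filter fun z => G.adj x z = false).card = D'.card :=
          hsplit
        have hc := congrArg (Nat.cast : ℕ → ℝ) hn
        push_cast at hc
        linarith
      rw [h3]
      nlinarith
    · intro z hz
      have h2 := (Finset.mem_filter.mp hz).2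
      have hsplit := bg_filter_split B (fun y => G.adj y z)
      have h3 : (G.deg2 z B : ℝ)
          = (B.card : ℝ) - ((B.filter fun y => G.adj y z = false).card : ℝ) := by
        have hn : (G.deg2 z B) + (B.filter fun y => G.adj y z = false).card = B.card :=
          hsplit
        have hc := congrArg (Nat.cast : ℕ → ℝ) hn
        push_cast at hc
        linarith
      rw [h3]
      nlinarith

lemma KP2 (G : Bigraph) (ε δ : ℝ) (hε : 0 < ε) (hδ : 0 < δ)
    (hc2 : 0 < (G.V2.card : ℝ)) (NP : NoPair G ε δ) (b : Bool) (B D : Finset ℕ)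
    (hB : B ⊆ G.V2) (hD : D ⊆ G.V1)
    (hrow : ∀ y ∈ B, ((D.filter fun z => G.adj z y = b).card : ℝ) < ε / 2 * D.card)
    (hBc : δ * G.V2.card ≤ B.card) (hDc : 2 * δ * G.V1.card ≤ D.card) : False := by
  classical
  have hBpos : 0 < (B.card : ℝ) := lt_of_lt_of_le (by positivity) hBc
  have hBne : B.Nonempty := Finset.card_pos.mp (by exact_mod_cast hBpos)
  set D' := D.filter (fun z => ((B.filter fun y => G.adj z y = b).card : ℝ) < ε * B.card)
    with hD'def
  have hsum : ∑ z ∈ D, ((B.filter fun y => G.adj z y = b).card)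
      = ∑ y ∈ B, ((D.filter fun z => G.adj z y = b).card) := by
    have := bg_count_comm D B (fun z y => G.adj z y = b)
    exact this
  have hsumR : (∑ z ∈ D, (((B.filter fun y => G.adj z y = b).card : ℝ)))
      < ε / 2 * D.card * B.card := by
    have h1 : (∑ y ∈ B, ((D.filter fun z => G.adj z y = b).card : ℝ))
        < ∑ _y ∈ B, ε / 2 * (D.card : ℝ) :=
      Finset.sum_lt_sum_of_nonempty hBne (fun y hy => hrow y hy)
    have h2 : (∑ _y ∈ B, ε / 2 * (D.card : ℝ)) = ε / 2 * D.card * B.card := by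
      rw [Finset.sum_const, nsmul_eq_mul]; ring
    have h3 : (∑ z ∈ D, (((B.filter fun y => G.adj z y = b).card : ℝ)))
        = (∑ y ∈ B, ((D.filter fun z => G.adj z y = b).card : ℝ)) := by
      exact_mod_cast congrArg (Nat.cast : ℕ → ℝ) hsum
    rw [h3]; linarith
  set E := D \ D' with hEdef
  have hEbound : ∀ z ∈ E, ε * B.card ≤ ((B.filter fun y => G.adj z y = b).card : ℝ) := by
    intro z hz
    rcases Finset.mem_sdiff.mp hz with ⟨hzD, hzD'⟩
    by_contra h
    push_neg at h
    exact hzD' (Finset.mem_filter.mpr ⟨hzD, h⟩)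
  have hE : (E.card : ℝ) * (ε * B.card)
      ≤ ∑ z ∈ D, ((B.filter fun y => G.adj z y = b).card : ℝ) := by
    calc (E.card : ℝ) * (ε * B.card) = ∑ _z ∈ E, ε * (B.card : ℝ) := by
          rw [Finset.sum_const, nsmul_eq_mul]
      _ ≤ ∑ z ∈ E, ((B.filter fun y => G.adj z y = b).card : ℝ) := Finset.sum_le_sum hEbound
      _ ≤ ∑ z ∈ D, ((B.filter fun y => G.adj z y = b).card : ℝ) :=
          Finset.sum_le_sum_of_subset_of_nonneg (Finset.sdiff_subset)
            (fun _ _ _ => by positivity)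
  have hEcard : (E.card : ℝ) < D.card / 2 := by
    have hεB : 0 < ε * B.card := mul_pos hε hBpos
    have h2 : (E.card : ℝ) * (ε * B.card) < (D.card / 2) * (ε * B.card) := by
      calc (E.card : ℝ) * (ε * B.card) ≤ _ := hE
        _ < ε / 2 * D.card * B.card := hsumR
        _ = (D.card / 2) * (ε * B.card) := by ring
    exact lt_of_mul_lt_mul_right h2 (le_of_lt hεB)
  have hD'sub : D' ⊆ D := Finset.filter_subset _ _
  have hD'card : (D.card : ℝ) < 2 * D'.card := by
    have h0 : E.card = D.card - D'.card := Finset.card_sdiff_of_subset hD'sub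
    have hle : D'.card ≤ D.card := Finset.card_le_card hD'sub
    have h1 : (E.card : ℝ) = (D.card : ℝ) - D'.card := by
      rw [h0, Nat.cast_sub hle]
    linarith
  have hD'c : δ * G.V1.card ≤ (D'.card : ℝ) := by linarith
  refine NP D' B (hD'sub.trans hD) hB hD'c hBc ?_
  cases b with
  | true =>
    left
    constructor
    · intro x hx
      have h2 := (Finset.mem_filter.mp hx).2
      exact h2
    · intro z hz
      have hsub : (D'.filter fun y => G.adj y z = true) ⊆ (D.filter fun y => G.adj y z = true) :=
        Finset.filter_subset_filter _ hD'sub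
      have h1 : (G.deg2 z D' : ℝ) ≤ ((D.filter fun y => G.adj y z = true).card : ℝ) := by
        exact_mod_cast Finset.card_le_card hsub
      have h2 := hrow z hz
      have h4 : ε / 2 * (D.card : ℝ) < ε * D'.card := by nlinarith
      calc (G.deg2 z D' : ℝ) ≤ _ := h1
        _ < ε / 2 * D.card := h2
        _ < ε * D'.card := h4
  | false =>
    right
    constructor
    · intro x hx
      have h2 := (Finset.mem_filter.mp hx).2
      have hsplit := bg_filter_split B (fun y => G.adj x y)
      have h3 : (G.deg1 x B : ℝ)
          = (B.card : ℝ) - ((B.filter fun y => G.adj x y = false).card : ℝ) := by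
        have hn : (G.deg1 x B) + (B.filter fun y => G.adj x y = false).card = B.card :=
          hsplit
        have hc := congrArg (Nat.cast : ℕ → ℝ) hn
        push_cast at hc
        linarith
      rw [h3]
      nlinarith
    · intro z hz
      have hsplit := bg_filter_split D' (fun y => G.adj y z)
      have hsub : (D'.filter fun y => G.adj y z = false) ⊆ (D.filter fun y => G.adj y z = false) :=
        Finset.filter_subset_filter _ hD'sub
      have h1 : ((D'.filter fun y => G.adj y z = false).card : ℝ) < ε / 2 * D.card :=
        lt_of_le_of_lt (by exact_mod_cast Finset.card_le_card hsub) (hrow z hz)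
      have h3 : (G.deg2 z D' : ℝ)
          = (D'.card : ℝ) - ((D'.filter fun y => G.adj y z = false).card : ℝ) := by
        have hn : (G.deg2 z D') + (D'.filter fun y => G.adj y z = false).card = D'.card :=
          hsplit
        have hc := congrArg (Nat.cast : ℕ → ℝ) hn
        push_cast at hc
        linarith
      rw [h3]
      nlinarith

set_option maxHeartbeats 1000000 in
lemma EMB (G : Bigraph) (ε δ : ℝ) (hε : 0 < ε) (hε1 : ε ≤ 1) (hδ : 0 < δ)
    (hc1 : 0 < (G.V1.card : ℝ)) (hc2 : 0 < (G.V2.card : ℝ)) (NP : NoPair G ε δ) :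
    ∀ (k : ℕ) (H : Bigraph) (C : ℕ → Finset ℕ),
      (H.V1 ∪ H.V2).card ≤ k →
      (∀ u ∈ H.V1, C u ⊆ G.V1) → (∀ v ∈ H.V2, C v ⊆ G.V2) →
      (∀ u ∈ H.V1, (2/ε)^(H.V2.card) * (2*δ*k*(G.V1.card : ℝ) + k) ≤ ((C u).card : ℝ)) →
      (∀ v ∈ H.V2, (2/ε)^(H.V1.card) * (2*δ*k*(G.V2.card : ℝ) + k) ≤ ((C v).card : ℝ)) →
      ∃ f : ℕ → ℕ, Set.InjOn f ↑(H.V1 ∪ H.V2) ∧ (∀ u ∈ H.V1, f u ∈ C u) ∧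
        (∀ v ∈ H.V2, f v ∈ C v) ∧
        ∀ u ∈ H.V1, ∀ v ∈ H.V2, H.adj u v = G.adj (f u) (f v) := by
  classical
  have hbase : (1:ℝ) ≤ 2/ε := by
    rw [le_div_iff₀ hε]; linarith
  have hpow : ∀ m : ℕ, (1:ℝ) ≤ (2/ε)^m := by
    intro m
    induction m with
    | zero => simp
    | succ n ihn =>
      rw [pow_succ]
      nlinarith
  intro k
  induction k with
  | zero =>
    intro H C hcard _ _ _ _
    have hemp : H.V1 ∪ H.V2 = ∅ := Finset.card_eq_zero.mp (Nat.le_zero.mp hcard)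
    obtain ⟨h1, h2⟩ := Finset.union_eq_empty.mp hemp
    exact ⟨id, by simp [hemp], by simp [h1], by simp [h2], by simp [h1]⟩
  | succ k ih =>
    intro H C hcard hC1 hC2 hS1 hS2
    by_cases hHe : H.V1 ∪ H.V2 = ∅
    · obtain ⟨h1, h2⟩ := Finset.union_eq_empty.mp hHe
      exact ⟨id, by simp [hHe], by simp [h1], by simp [h2], by simp [h1]⟩
    by_cases hV1 : H.V1.Nonempty
    · -- main case: remove a vertex w ∈ H.V1
      obtain ⟨w, hw⟩ := hV1
      have hwnotV2 : w ∉ H.V2 := Finset.disjoint_left.mp H.disj hw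
      have hunion : (H.V1 ∪ H.V2).card = H.V1.card + H.V2.card :=
        Finset.card_union_of_disjoint H.disj
      have hw1 : 1 ≤ H.V1.card := Finset.card_pos.mpr ⟨w, hw⟩
      have hV2k : H.V2.card ≤ k := by omega
      -- bad sets
      set Bad : ℕ → Finset ℕ := fun v => (C w).filter
        (fun y => (((C v).filter fun z => G.adj y z = H.adj w v).card : ℝ)
          < ε / 2 * ((C v).card : ℝ)) with hBaddef
      have hBadcard : ∀ v ∈ H.V2, ((Bad v).card : ℝ) ≤ δ * G.V1.card := by
        intro v hv
        by_contra hcon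
        push_neg at hcon
        refine KP1 G ε δ hε hδ hc1 NP (H.adj w v) (Bad v) (C v)
          ((Finset.filter_subset _ _).trans (hC1 w hw)) (hC2 v hv)
          (fun y hy => (Finset.mem_filter.mp hy).2) (le_of_lt hcon) ?_
        have h2 := hS2 v hv
        have hp := hpow (H.V1.card)
        have hk : (0:ℝ) ≤ (k:ℕ) := Nat.cast_nonneg k
        have hx : (0:ℝ) ≤ 2*δ*((k:ℝ)+1)*(G.V2.card:ℝ) + ((k:ℝ)+1) := by positivity
        have h3 : 2*δ*((k:ℝ)+1)*(G.V2.card:ℝ) + ((k:ℝ)+1)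
            ≤ (2/ε)^(H.V1.card) * (2*δ*((k:ℝ)+1)*(G.V2.card:ℝ) + ((k:ℝ)+1)) :=
          le_mul_of_one_le_left hx hp
        push_cast at h2
        nlinarith [mul_nonneg (mul_nonneg hδ.le hk) hc2.le]
      -- good set nonempty
      set Gd := (C w) \ H.V2.biUnion Bad with hGddef
      have hGdcard : ((C w).card : ℝ) ≤ (Gd.card : ℝ) + (k:ℝ) * (δ * G.V1.card) := by
        have hsub : C w ⊆ Gd ∪ H.V2.biUnion Bad := by
          intro a ha
          by_cases h : a ∈ H.V2.biUnion Bad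
          · exact Finset.mem_union_right _ h
          · exact Finset.mem_union_left _ (Finset.mem_sdiff.mpr ⟨ha, h⟩)
        have h1 : (C w).card ≤ Gd.card + (H.V2.biUnion Bad).card :=
          (Finset.card_le_card hsub).trans (Finset.card_union_le _ _)
        have h2 : ((H.V2.biUnion Bad).card : ℝ) ≤ (H.V2.card : ℝ) * (δ * G.V1.card) := by
          have hb : ((H.V2.biUnion Bad).card : ℕ) ≤ ∑ v ∈ H.V2, (Bad v).card :=
            Finset.card_biUnion_le
          have hb' : ((H.V2.biUnion Bad).card : ℝ) ≤ ∑ v ∈ H.V2, ((Bad v).card : ℝ) := by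
            exact_mod_cast hb
          calc ((H.V2.biUnion Bad).card : ℝ) ≤ _ := hb'
            _ ≤ ∑ _v ∈ H.V2, δ * (G.V1.card:ℝ) := Finset.sum_le_sum hBadcard
            _ = (H.V2.card : ℝ) * (δ * G.V1.card) := by
                rw [Finset.sum_const, nsmul_eq_mul]
        have h3 : (H.V2.card : ℝ) * (δ * G.V1.card) ≤ (k:ℝ) * (δ * G.V1.card) := by
          have : (H.V2.card : ℝ) ≤ (k:ℝ) := by exact_mod_cast hV2k
          exact mul_le_mul_of_nonneg_right this (by positivity)
        have h1' : ((C w).card : ℝ) ≤ (Gd.card : ℝ) + ((H.V2.biUnion Bad).card : ℝ) := by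
          exact_mod_cast h1
        linarith
      have hGdne : Gd.Nonempty := by
        rw [← Finset.card_pos]
        by_contra hcon
        push_neg at hcon
        have h0 : Gd.card = 0 := Nat.le_zero.mp hcon
        have hCw := hS1 w hw
        have hp := hpow (H.V2.card)
        have hx : (0:ℝ) ≤ 2*δ*((k:ℝ)+1)*(G.V1.card:ℝ) + ((k:ℝ)+1) := by positivity
        have h3 : 2*δ*((k:ℝ)+1)*(G.V1.card:ℝ) + ((k:ℝ)+1)
            ≤ (2/ε)^(H.V2.card) * (2*δ*((k:ℝ)+1)*(G.V1.card:ℝ) + ((k:ℝ)+1)) :=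
          le_mul_of_one_le_left hx hp
        have hk : (0:ℝ) ≤ (k:ℕ) := Nat.cast_nonneg k
        push_cast at hCw
        rw [h0] at hGdcard
        push_cast at hGdcard
        nlinarith [mul_nonneg (mul_nonneg hδ.le hk) hc1.le, mul_pos hδ hc1]
      obtain ⟨y, hy⟩ := hGdne
      have hyCw : y ∈ C w := (Finset.mem_sdiff.mp hy).1
      have hygood : ∀ v ∈ H.V2,
          ε / 2 * ((C v).card : ℝ)
            ≤ (((C v).filter fun z => G.adj y z = H.adj w v).card : ℝ) := by
        intro v hv
        have hnot : y ∉ Bad v := fun h =>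
          (Finset.mem_sdiff.mp hy).2 (Finset.mem_biUnion.mpr ⟨v, hv, h⟩)
        by_contra h
        push_neg at h
        exact hnot (Finset.mem_filter.mpr ⟨hyCw, h⟩)
      -- new bigraph and candidate sets
      set H' : Bigraph := ⟨H.V1.erase w, H.V2,
        Finset.disjoint_of_subset_left (Finset.erase_subset _ _) H.disj, H.adj⟩ with hH'def
      set C' : ℕ → Finset ℕ := fun v =>
        if v ∈ H.V2 then (C v).filter (fun z => G.adj y z = H.adj w v)
        else (C v).erase y with hC'def
      have hcard' : (H'.V1 ∪ H'.V2).card ≤ k := by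
        have heq : H'.V1 ∪ H'.V2 = (H.V1 ∪ H.V2).erase w := by
          ext a
          simp only [hH'def, Finset.mem_union, Finset.mem_erase]
          constructor
          · rintro (⟨hne, ha⟩ | ha)
            · exact ⟨hne, Or.inl ha⟩
            · exact ⟨fun h => hwnotV2 (h ▸ ha), Or.inr ha⟩
          · rintro ⟨hne, ha | ha⟩
            · exact Or.inl ⟨hne, ha⟩
            · exact Or.inr ha
        rw [heq, Finset.card_erase_of_mem (Finset.mem_union_left _ hw)]
        omega
      have hC1' : ∀ u ∈ H'.V1, C' u ⊆ G.V1 := by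
        intro u hu
        have huV1 : u ∈ H.V1 := Finset.mem_of_mem_erase hu
        have hun2 : u ∉ H.V2 := Finset.disjoint_left.mp H.disj huV1
        simp only [hC'def, if_neg hun2]
        exact (Finset.erase_subset _ _).trans (hC1 u huV1)
      have hC2' : ∀ v ∈ H'.V2, C' v ⊆ G.V2 := by
        intro v hv
        simp only [hC'def, if_pos (show v ∈ H.V2 from hv)]
        exact (Finset.filter_subset _ _).trans (hC2 v hv)
      have hS1' : ∀ u ∈ H'.V1,
          (2/ε)^(H'.V2.card) * (2*δ*k*(G.V1.card : ℝ) + k) ≤ ((C' u).card : ℝ) := by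
        intro u hu
        have huV1 : u ∈ H.V1 := Finset.mem_of_mem_erase hu
        have hun2 : u ∉ H.V2 := Finset.disjoint_left.mp H.disj huV1
        simp only [hC'def, if_neg hun2]
        have herase : ((C u).card : ℝ) - 1 ≤ (((C u).erase y).card : ℝ) := by
          have h0 : (C u).card - 1 ≤ ((C u).erase y).card := Finset.pred_card_le_card_erase
          calc ((C u).card : ℝ) - 1 ≤ (((C u).card - 1 : ℕ) : ℝ) := by
                push_cast
                cases Nat.eq_zero_or_pos (C u).card with
                | inl h => simp [h]
                | inr h =>
                  rw [Nat.cast_sub h]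
                  push_cast; linarith
            _ ≤ _ := by exact_mod_cast h0
        have h2 := hS1 u huV1
        have hp := hpow (H.V2.card)
        have hd1 : (1:ℝ) ≤ 2*δ*(G.V1.card:ℝ) + 1 := by nlinarith [mul_pos hδ hc1]
        have hdiff : (1:ℝ) ≤ (2/ε)^(H.V2.card) * (2*δ*(G.V1.card:ℝ) + 1) := by
          calc (1:ℝ) = 1 * 1 := by ring
            _ ≤ (2/ε)^(H.V2.card) * (2*δ*(G.V1.card:ℝ) + 1) :=
              mul_le_mul hp hd1 (by norm_num) (by positivity)
        have he2 : H'.V2.card = H.V2.card := by simp [hH'def]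
        rw [he2]
        push_cast at h2 ⊢
        nlinarith [h2, herase, hdiff]
      have hS2' : ∀ v ∈ H'.V2,
          (2/ε)^(H'.V1.card) * (2*δ*k*(G.V2.card : ℝ) + k) ≤ ((C' v).card : ℝ) := by
        intro v hv
        simp only [hC'def, if_pos (show v ∈ H.V2 from hv)]
        have h2 := hS2 v hv
        have hg := hygood v hv
        have hcard1 : H.V1.card = H'.V1.card + 1 := by
          simp only [hH'def]
          rw [Finset.card_erase_of_mem hw]
          omega
        have hpn : (0:ℝ) ≤ (2/ε)^(H'.V1.card) := by positivity
        have hstep1 : (2/ε)^(H'.V1.card) * (2*δ*(k:ℝ)*(G.V2.card:ℝ) + (k:ℝ))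
            ≤ (2/ε)^(H'.V1.card) * (2*δ*((k:ℝ)+1)*(G.V2.card:ℝ) + ((k:ℝ)+1)) := by
          apply mul_le_mul_of_nonneg_left _ hpn
          nlinarith [mul_pos hδ hc2]
        have hstep2 : (2/ε)^(H'.V1.card) * (2*δ*((k:ℝ)+1)*(G.V2.card:ℝ) + ((k:ℝ)+1))
            = ε/2 * ((2/ε)^(H.V1.card) * (2*δ*((k:ℝ)+1)*(G.V2.card:ℝ) + ((k:ℝ)+1))) := by
          rw [hcard1, pow_succ]
          field_simp
        have hstep3 : ε/2 * ((2/ε)^(H.V1.card) * (2*δ*((k:ℝ)+1)*(G.V2.card:ℝ) + ((k:ℝ)+1)))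
            ≤ ε/2 * ((C v).card : ℝ) := by
          apply mul_le_mul_of_nonneg_left _ (by positivity)
          push_cast at h2 ⊢
          linarith
        push_cast
        calc (2/ε)^(H'.V1.card) * (2*δ*(k:ℝ)*(G.V2.card:ℝ) + (k:ℝ)) ≤ _ := hstep1
          _ = _ := hstep2
          _ ≤ ε/2 * ((C v).card : ℝ) := hstep3
          _ ≤ _ := hg
      obtain ⟨f', hfInj, hf1, hf2, hfadj⟩ := ih H' C' hcard' hC1' hC2' hS1' hS2'
      have hfne : ∀ a, a ∈ H.V1 ∪ H.V2 → a ≠ w → f' a ≠ y := by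
        intro a ha hne
        rcases Finset.mem_union.mp ha with h1 | h2
        · have ha' : a ∈ H'.V1 := Finset.mem_erase.mpr ⟨hne, h1⟩
          have := hf1 a ha'
          have hun2 : a ∉ H.V2 := Finset.disjoint_left.mp H.disj h1
          simp only [hC'def, if_neg hun2] at this
          exact Finset.ne_of_mem_erase this
        · have := hf2 a h2
          have hsub := hC2' a h2
          have hfa : f' a ∈ G.V2 := hsub this
          have hyG : y ∈ G.V1 := hC1 w hw hyCw
          intro heq
          exact Finset.disjoint_left.mp G.disj hyG (heq ▸ hfa)
      have hmem' : ∀ a, a ∈ H.V1 ∪ H.V2 → a ≠ w → a ∈ H'.V1 ∪ H'.V2 := by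
        intro a ha hne
        rcases Finset.mem_union.mp ha with h1 | h2
        · exact Finset.mem_union_left _ (Finset.mem_erase.mpr ⟨hne, h1⟩)
        · exact Finset.mem_union_right _ h2
      refine ⟨Function.update f' w y, ?_, ?_, ?_, ?_⟩
      · intro a ha b hb hab
        simp only [Finset.coe_union, Set.mem_union, Finset.mem_coe] at ha hb
        have ha' : a ∈ H.V1 ∪ H.V2 := Finset.mem_union.mpr ha
        have hb' : b ∈ H.V1 ∪ H.V2 := Finset.mem_union.mpr hb
        by_cases haw : a = w
        · by_cases hbw : b = w
          · rw [haw, hbw]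
          · exfalso
            rw [haw, Function.update_self, Function.update_of_ne hbw] at hab
            exact hfne b hb' hbw hab.symm
        · by_cases hbw : b = w
          · exfalso
            rw [hbw, Function.update_self, Function.update_of_ne haw] at hab
            exact hfne a ha' haw hab
          · rw [Function.update_of_ne haw, Function.update_of_ne hbw] at hab
            exact hfInj (by exact_mod_cast hmem' a ha' haw)
              (by exact_mod_cast hmem' b hb' hbw) hab
      · intro u hu
        by_cases huw : u = w
        · rw [huw, Function.update_self]; exact hyCw
        · rw [Function.update_of_ne huw]
          have hu' : u ∈ H'.V1 := Finset.mem_erase.mpr ⟨huw, hu⟩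
          have := hf1 u hu'
          have hun2 : u ∉ H.V2 := Finset.disjoint_left.mp H.disj hu
          simp only [hC'def, if_neg hun2] at this
          exact Finset.mem_of_mem_erase this
      · intro v hv
        have hvw : v ≠ w := fun h => hwnotV2 (h ▸ hv)
        rw [Function.update_of_ne hvw]
        have := hf2 v hv
        simp only [hC'def, if_pos hv] at this
        exact Finset.filter_subset _ _ this
      · intro u hu v hv
        have hvw : v ≠ w := fun h => hwnotV2 (h ▸ hv)
        rw [Function.update_of_ne hvw]
        by_cases huw : u = w
        · subst huw
          rw [Function.update_self]
          have := hf2 v hv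
          simp only [hC'def, if_pos hv] at this
          exact ((Finset.mem_filter.mp this).2).symm
        · rw [Function.update_of_ne huw]
          exact hfadj u (Finset.mem_erase.mpr ⟨huw, hu⟩) v hv
    · -- H.V1 empty, remove w ∈ H.V2
      have hV1e : H.V1 = ∅ := Finset.not_nonempty_iff_eq_empty.mp hV1
      have hV2ne : H.V2.Nonempty := by
        rw [Finset.nonempty_iff_ne_empty]
        intro h
        exact hHe (by rw [hV1e, h]; simp)
      obtain ⟨w, hw⟩ := hV2ne
      have hCwne : (C w).Nonempty := by
        rw [← Finset.card_pos]
        have h2 := hS2 w hw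
        have hp := hpow (H.V1.card)
        have hx : (0:ℝ) ≤ 2*δ*((k:ℝ)+1)*(G.V2.card:ℝ) + ((k:ℝ)+1) := by positivity
        have h3 : 2*δ*((k:ℝ)+1)*(G.V2.card:ℝ) + ((k:ℝ)+1)
            ≤ (2/ε)^(H.V1.card) * (2*δ*((k:ℝ)+1)*(G.V2.card:ℝ) + ((k:ℝ)+1)) :=
          le_mul_of_one_le_left hx hp
        push_cast at h2
        by_contra hcon
        push_neg at hcon
        have h0 : (C w).card = 0 := Nat.le_zero.mp hcon
        rw [h0] at h2
        push_cast at h2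
        have hk : (0:ℝ) ≤ (k:ℕ) := Nat.cast_nonneg k
        nlinarith [mul_nonneg (mul_nonneg hδ.le hk) hc2.le, mul_pos hδ hc2]
      obtain ⟨y, hyCw⟩ := hCwne
      set H' : Bigraph := ⟨H.V1, H.V2.erase w,
        Finset.disjoint_of_subset_right (Finset.erase_subset _ _) H.disj, H.adj⟩ with hH'def
      set C' : ℕ → Finset ℕ := fun v => (C v).erase y with hC'def
      have hcard' : (H'.V1 ∪ H'.V2).card ≤ k := by
        have heq : H'.V1 ∪ H'.V2 = (H.V1 ∪ H.V2).erase w := by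
          simp only [hH'def, hV1e]
          simp
        rw [heq, Finset.card_erase_of_mem (Finset.mem_union_right _ hw)]
        omega
      have hC1' : ∀ u ∈ H'.V1, C' u ⊆ G.V1 := by
        intro u hu
        simp only [hH'def, hV1e] at hu
        exact absurd hu (Finset.notMem_empty u)
      have hC2' : ∀ v ∈ H'.V2, C' v ⊆ G.V2 := by
        intro v hv
        exact (Finset.erase_subset _ _).trans (hC2 v (Finset.mem_of_mem_erase hv))
      have hS1' : ∀ u ∈ H'.V1,
          (2/ε)^(H'.V2.card) * (2*δ*k*(G.V1.card : ℝ) + k) ≤ ((C' u).card : ℝ) := by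
        intro u hu
        simp only [hH'def, hV1e] at hu
        exact absurd hu (Finset.notMem_empty u)
      have hS2' : ∀ v ∈ H'.V2,
          (2/ε)^(H'.V1.card) * (2*δ*k*(G.V2.card : ℝ) + k) ≤ ((C' v).card : ℝ) := by
        intro v hv
        have hvV2 : v ∈ H.V2 := Finset.mem_of_mem_erase hv
        have h2 := hS2 v hvV2
        have herase : ((C v).card : ℝ) - 1 ≤ (((C v).erase y).card : ℝ) := by
          have h0 : (C v).card - 1 ≤ ((C v).erase y).card := Finset.pred_card_le_card_erase
          calc ((C v).card : ℝ) - 1 ≤ (((C v).card - 1 : ℕ) : ℝ) := by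
                cases Nat.eq_zero_or_pos (C v).card with
                | inl h => simp [h]
                | inr h =>
                  rw [Nat.cast_sub h]
                  push_cast; linarith
            _ ≤ _ := by exact_mod_cast h0
        have hp := hpow (H.V1.card)
        have hd1 : (1:ℝ) ≤ 2*δ*(G.V2.card:ℝ) + 1 := by nlinarith [mul_pos hδ hc2]
        have hdiff : (1:ℝ) ≤ (2/ε)^(H.V1.card) * (2*δ*(G.V2.card:ℝ) + 1) := by
          calc (1:ℝ) = 1 * 1 := by ring
            _ ≤ (2/ε)^(H.V1.card) * (2*δ*(G.V2.card:ℝ) + 1) :=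
              mul_le_mul hp hd1 (by norm_num) (by positivity)
        have he1 : H'.V1.card = H.V1.card := by simp [hH'def]
        rw [he1]
        simp only [hC'def]
        push_cast at h2 ⊢
        nlinarith [h2, herase, hdiff]
      obtain ⟨f', hfInj, hf1, hf2, hfadj⟩ := ih H' C' hcard' hC1' hC2' hS1' hS2'
      have hfne : ∀ a, a ∈ H.V2 → a ≠ w → f' a ≠ y := by
        intro a ha hne
        have ha' : a ∈ H'.V2 := Finset.mem_erase.mpr ⟨hne, ha⟩
        have := hf2 a ha'
        simp only [hC'def] at this
        exact Finset.ne_of_mem_erase this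
      refine ⟨Function.update f' w y, ?_, ?_, ?_, ?_⟩
      · intro a ha b hb hab
        simp only [Finset.coe_union, Set.mem_union, Finset.mem_coe, hV1e,
          Finset.coe_empty, Set.mem_empty_iff_false, false_or] at ha hb
        by_cases haw : a = w
        · by_cases hbw : b = w
          · rw [haw, hbw]
          · exfalso
            rw [haw, Function.update_self, Function.update_of_ne hbw] at hab
            exact hfne b hb hbw hab.symm
        · by_cases hbw : b = w
          · exfalso
            rw [hbw, Function.update_self, Function.update_of_ne haw] at hab
            exact hfne a ha haw hab
          · rw [Function.update_of_ne haw, Function.update_of_ne hbw] at hab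
            refine hfInj ?_ ?_ hab
            · simp only [hH'def, Finset.coe_union, Set.mem_union, Finset.mem_coe]
              exact Or.inr (Finset.mem_erase.mpr ⟨haw, ha⟩)
            · simp only [hH'def, Finset.coe_union, Set.mem_union, Finset.mem_coe]
              exact Or.inr (Finset.mem_erase.mpr ⟨hbw, hb⟩)
      · intro u hu
        rw [hV1e] at hu
        exact absurd hu (Finset.notMem_empty u)
      · intro v hv
        by_cases hvw : v = w
        · rw [hvw, Function.update_self]; exact hyCw
        · rw [Function.update_of_ne hvw]
          have := hf2 v (Finset.mem_erase.mpr ⟨hvw, hv⟩)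
          simp only [hC'def] at this
          exact Finset.mem_of_mem_erase this
      · intro u hu
        rw [hV1e] at hu
        exact absurd hu (Finset.notMem_empty u)


set_option maxHeartbeats 1000000 in
lemma bigcase (G H : Bigraph) (ε0 δ : ℝ) (K : ℕ)
    (hε0 : 0 < ε0) (hε01 : ε0 ≤ 1) (hδpos : 0 < δ)
    (hδd0 : δ ≤ (ε0/2)^K / (4*(K:ℝ)))
    (hK1 : (1:ℝ) ≤ (K:ℝ))
    (hcard : (H.V1 ∪ H.V2).card ≤ K)
    (hc1 : 0 < (G.V1.card : ℝ)) (hc2 : 0 < (G.V2.card : ℝ))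
    (hT1 : 2*(K:ℝ)*(2/ε0)^K ≤ (G.V1.card : ℝ))
    (hT2 : 2*(K:ℝ)*(2/ε0)^K ≤ (G.V2.card : ℝ))
    (NP : NoPair G ε0 δ) : G.Bicontains H := by
  classical
  have hKpos : (0:ℝ) < (K:ℝ) := lt_of_lt_of_le one_pos hK1
  have hbase0 : (1:ℝ) ≤ 2/ε0 := by
    rw [le_div_iff₀ hε0]; linarith
  have hppos : (0:ℝ) < (2/ε0)^K := by positivity
  have hqpos : (0:ℝ) < (ε0/2)^K := by positivity
  have hpq : (2/ε0)^K * (ε0/2)^K = 1 := by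
    rw [← mul_pow]
    field_simp
    exact one_pow K
  have heV1 : H.V1.card ≤ K := by
    have := Finset.card_le_card (Finset.subset_union_left (s₁ := H.V1) (s₂ := H.V2))
    omega
  have heV2 : H.V2.card ≤ K := by
    have := Finset.card_le_card (Finset.subset_union_right (s₁ := H.V1) (s₂ := H.V2))
    omega
  have hsize : ∀ (e : ℕ) (c : ℝ), e ≤ K → 2*(K:ℝ)*(2/ε0)^K ≤ c →
      (2/ε0)^e * (2*δ*(K:ℝ)*c + (K:ℝ)) ≤ c := by
    intro e c he hc
    have hc0 : 0 < c := lt_of_lt_of_le (by positivity) hc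
    have hpe : (2/ε0)^e ≤ (2/ε0)^K := pow_le_pow_right₀ hbase0 he
    have hin : (0:ℝ) ≤ 2*δ*(K:ℝ)*c + (K:ℝ) := by positivity
    have h1 : (2/ε0)^e * (2*δ*(K:ℝ)*c + (K:ℝ)) ≤ (2/ε0)^K * (2*δ*(K:ℝ)*c + (K:ℝ)) :=
      mul_le_mul_of_nonneg_right hpe hin
    have h2 : (2/ε0)^K * (2*δ*(K:ℝ)*c + (K:ℝ))
        ≤ (2/ε0)^K * (2*((ε0/2)^K / (4*(K:ℝ)))*(K:ℝ)*c + (K:ℝ)) := by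
      apply mul_le_mul_of_nonneg_left _ hppos.le
      have h5 : 2*δ*(K:ℝ)*c ≤ 2*((ε0/2)^K / (4*(K:ℝ)))*(K:ℝ)*c := by
        apply mul_le_mul_of_nonneg_right _ hc0.le
        apply mul_le_mul_of_nonneg_right _ hKpos.le
        linarith
      linarith
    have h3 : (2/ε0)^K * (2*((ε0/2)^K / (4*(K:ℝ)))*(K:ℝ)*c + (K:ℝ))
        = c/2 + (2/ε0)^K*(K:ℝ) := by
      have hKne : (K:ℝ) ≠ 0 := ne_of_gt hKpos
      field_simp
      nlinarith [hpq]
    have h4 : (2/ε0)^K * (K:ℝ) ≤ c / 2 := by nlinarith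
    linarith
  set C : ℕ → Finset ℕ := fun u => if u ∈ H.V1 then G.V1 else G.V2 with hCdef
  have hemb := EMB G ε0 δ hε0 hε01 hδpos hc1 hc2 NP K H C hcard
    (fun u hu => by simp only [hCdef, if_pos hu]; exact subset_rfl)
    (fun v hv => by
      have : v ∉ H.V1 := Finset.disjoint_right.mp H.disj hv
      simp only [hCdef, if_neg this]; exact subset_rfl)
    (fun u hu => by
      simp only [hCdef, if_pos hu]
      exact hsize (H.V2.card) _ heV2 hT1)
    (fun v hv => by
      have : v ∉ H.V1 := Finset.disjoint_right.mp H.disj hv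
      simp only [hCdef, if_neg this]
      exact hsize (H.V1.card) _ heV1 hT2)
  obtain ⟨f, hinj, hf1, hf2, hadj⟩ := hemb
  refine ⟨f, hinj, ?_, ?_, hadj⟩
  · intro u hu
    have := hf1 u hu
    simpa only [hCdef, if_pos hu] using this
  · intro v hv
    have hnv : v ∉ H.V1 := Finset.disjoint_right.mp H.disj hv
    have := hf2 v hv
    simpa only [hCdef, if_neg hnv] using this


set_option maxHeartbeats 2000000 in
/-- For every bigraph `H` and every `ε > 0` there exists `δ > 0` such that every
`H`-free bigraph `G` with both sides nonempty contains linear-sized `A1 ⊆ V1(G)`,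
`A2 ⊆ V2(G)` forming a sparse or a dense pair. -/
theorem stmt0 (H : Bigraph) (ε : ℝ) (hε : 0 < ε) :
    ∃ δ : ℝ, 0 < δ ∧ ∀ G : Bigraph, ¬ G.Bicontains H → G.V1.Nonempty → G.V2.Nonempty →
      ∃ A1 A2 : Finset ℕ, A1 ⊆ G.V1 ∧ A2 ⊆ G.V2 ∧
        δ * (G.V1.card : ℝ) ≤ (A1.card : ℝ) ∧ δ * (G.V2.card : ℝ) ≤ (A2.card : ℝ) ∧
        (((∀ x ∈ A1, (G.deg1 x A2 : ℝ) < ε * (A2.card : ℝ)) ∧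
          (∀ y ∈ A2, (G.deg2 y A1 : ℝ) < ε * (A1.card : ℝ))) ∨
         ((∀ x ∈ A1, (1 - ε) * (A2.card : ℝ) < (G.deg1 x A2 : ℝ)) ∧
          (∀ y ∈ A2, (1 - ε) * (A1.card : ℝ) < (G.deg2 y A1 : ℝ)))) := by
  classical
  set ε0 : ℝ := min ε 1 with hε0def
  have hε0 : 0 < ε0 := lt_min hε one_pos
  have hε01 : ε0 ≤ 1 := min_le_right _ _
  have hε0ε : ε0 ≤ ε := min_le_left _ _
  set K : ℕ := (H.V1 ∪ H.V2).card + 1 with hKdef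
  have hK1 : (1:ℝ) ≤ (K:ℝ) := by exact_mod_cast Nat.one_le_iff_ne_zero.mpr (by omega)
  have hKpos : (0:ℝ) < (K:ℝ) := lt_of_lt_of_le one_pos hK1
  set p : ℝ := (2/ε0)^K with hpdef
  set q : ℝ := (ε0/2)^K with hqdef
  have hbase0 : (1:ℝ) ≤ 2/ε0 := by
    rw [le_div_iff₀ hε0]; linarith
  have hppos : 0 < p := by positivity
  have hp1 : 1 ≤ p := bg_one_le_pow hbase0 K
  have hqpos : 0 < q := by positivity
  have hpq : p * q = 1 := by
    rw [hpdef, hqdef, ← mul_pow]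
    field_simp
    exact one_pow K
  set T : ℝ := 2 * K * p with hTdef
  have hTpos : 0 < T := by positivity
  set d0 : ℝ := q / (4 * K) with hd0def
  have hd0pos : 0 < d0 := by positivity
  set δ : ℝ := min d0 (min (1/T) (1/2)) with hδdef
  have hδpos : 0 < δ := lt_min hd0pos (lt_min (by positivity) (by norm_num))
  have hδd0 : δ ≤ d0 := min_le_left _ _
  have hδT : δ ≤ 1/T := (min_le_right _ _).trans (min_le_left _ _)
  have hδhalf : δ ≤ 1/2 := (min_le_right _ _).trans (min_le_right _ _)
  refine ⟨δ, hδpos, ?_⟩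
  intro G hG hne1 hne2
  have hc1 : 0 < (G.V1.card : ℝ) := by exact_mod_cast Finset.card_pos.mpr hne1
  have hc2 : 0 < (G.V2.card : ℝ) := by exact_mod_cast Finset.card_pos.mpr hne2
  by_cases hsmall1 : (G.V1.card : ℝ) < T
  · -- V1 small: singleton on V1 side
    obtain ⟨x, hx⟩ := hne1
    set Nn := G.V2.filter (fun z => G.adj x z = false) with hNndef
    set Nb := G.V2.filter (fun z => G.adj x z = true) with hNbdef
    have hsplit : Nb.card + Nn.card = G.V2.card := bg_filter_split G.V2 (fun z => G.adj x z)
    have hA1c : δ * (G.V1.card:ℝ) ≤ ((({x} : Finset ℕ)).card : ℝ) := by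
      rw [Finset.card_singleton]
      push_cast
      calc δ * (G.V1.card:ℝ) ≤ (1/T) * (G.V1.card:ℝ) :=
            mul_le_mul_of_nonneg_right hδT hc1.le
        _ ≤ (1/T) * T := mul_le_mul_of_nonneg_left hsmall1.le (by positivity)
        _ = 1 := by field_simp
    by_cases hch : (G.V2.card : ℝ) ≤ 2 * Nn.card
    · refine ⟨{x}, Nn, Finset.singleton_subset_iff.mpr hx, Finset.filter_subset _ _,
        hA1c, ?_, Or.inl ⟨?_, ?_⟩⟩
      · calc δ * (G.V2.card:ℝ) ≤ (1/2) * (G.V2.card:ℝ) :=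
            mul_le_mul_of_nonneg_right hδhalf hc2.le
          _ ≤ (Nn.card : ℝ) := by linarith
      · intro x' hx'
        rw [Finset.mem_singleton.mp hx']
        have hNnpos : 0 < (Nn.card : ℝ) := by linarith
        have h0 : G.deg1 x Nn = 0 := by
          rw [Bigraph.deg1, Finset.card_eq_zero, Finset.filter_eq_empty_iff]
          intro z hz
          have := (Finset.mem_filter.mp hz).2
          simp [this]
        rw [h0]
        push_cast
        positivity
      · intro y hy
        have hadj : G.adj x y = false := (Finset.mem_filter.mp hy).2
        have h0 : G.deg2 y {x} = 0 := by
          rw [Bigraph.deg2, Finset.card_eq_zero, Finset.filter_eq_empty_iff]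
          intro z hz
          rw [Finset.mem_singleton.mp hz]
          simp [hadj]
        rw [h0, Finset.card_singleton]
        push_cast
        linarith
    · push_neg at hch
      have hNb : (G.V2.card:ℝ) ≤ 2 * Nb.card := by
        have : (Nb.card:ℝ) + Nn.card = G.V2.card := by exact_mod_cast hsplit
        linarith
      have hNbpos : 0 < (Nb.card : ℝ) := by linarith
      refine ⟨{x}, Nb, Finset.singleton_subset_iff.mpr hx, Finset.filter_subset _ _,
        hA1c, ?_, Or.inr ⟨?_, ?_⟩⟩
      · calc δ * (G.V2.card:ℝ) ≤ (1/2) * (G.V2.card:ℝ) :=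
            mul_le_mul_of_nonneg_right hδhalf hc2.le
          _ ≤ (Nb.card : ℝ) := by linarith
      · intro x' hx'
        rw [Finset.mem_singleton.mp hx']
        have h0 : G.deg1 x Nb = Nb.card := by
          rw [Bigraph.deg1]
          congr 1
          rw [Finset.filter_eq_self]
          intro z hz
          exact (Finset.mem_filter.mp hz).2
        rw [h0]
        nlinarith
      · intro y hy
        have hadj : G.adj x y = true := (Finset.mem_filter.mp hy).2
        have h0 : G.deg2 y {x} = 1 := by
          rw [Bigraph.deg2, Finset.filter_singleton, if_pos hadj, Finset.card_singleton]
        rw [h0, Finset.card_singleton]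
        push_cast
        nlinarith
  by_cases hsmall2 : (G.V2.card : ℝ) < T
  · -- V2 small: singleton on V2 side
    obtain ⟨x, hx⟩ := hne2
    set Nn := G.V1.filter (fun z => G.adj z x = false) with hNndef
    set Nb := G.V1.filter (fun z => G.adj z x = true) with hNbdef
    have hsplit : Nb.card + Nn.card = G.V1.card := bg_filter_split G.V1 (fun z => G.adj z x)
    have hA2c : δ * (G.V2.card:ℝ) ≤ ((({x} : Finset ℕ)).card : ℝ) := by
      rw [Finset.card_singleton]
      push_cast
      calc δ * (G.V2.card:ℝ) ≤ (1/T) * (G.V2.card:ℝ) :=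
            mul_le_mul_of_nonneg_right hδT hc2.le
        _ ≤ (1/T) * T := mul_le_mul_of_nonneg_left hsmall2.le (by positivity)
        _ = 1 := by field_simp
    by_cases hch : (G.V1.card : ℝ) ≤ 2 * Nn.card
    · refine ⟨Nn, {x}, Finset.filter_subset _ _, Finset.singleton_subset_iff.mpr hx,
        ?_, hA2c, Or.inl ⟨?_, ?_⟩⟩
      · calc δ * (G.V1.card:ℝ) ≤ (1/2) * (G.V1.card:ℝ) :=
            mul_le_mul_of_nonneg_right hδhalf hc1.le
          _ ≤ (Nn.card : ℝ) := by linarith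
      · intro z hz
        have hadj : G.adj z x = false := (Finset.mem_filter.mp hz).2
        have h0 : G.deg1 z {x} = 0 := by
          rw [Bigraph.deg1, Finset.card_eq_zero, Finset.filter_eq_empty_iff]
          intro w hw
          rw [Finset.mem_singleton.mp hw]
          simp [hadj]
        rw [h0, Finset.card_singleton]
        push_cast
        linarith
      · intro y hy
        rw [Finset.mem_singleton.mp hy]
        have hNnpos : 0 < (Nn.card : ℝ) := by linarith
        have h0 : G.deg2 x Nn = 0 := by
          rw [Bigraph.deg2, Finset.card_eq_zero, Finset.filter_eq_empty_iff]
          intro z hz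
          have := (Finset.mem_filter.mp hz).2
          simp [this]
        rw [h0]
        push_cast
        positivity
    · push_neg at hch
      have hNb : (G.V1.card:ℝ) ≤ 2 * Nb.card := by
        have : (Nb.card:ℝ) + Nn.card = G.V1.card := by exact_mod_cast hsplit
        linarith
      have hNbpos : 0 < (Nb.card : ℝ) := by linarith
      refine ⟨Nb, {x}, Finset.filter_subset _ _, Finset.singleton_subset_iff.mpr hx,
        ?_, hA2c, Or.inr ⟨?_, ?_⟩⟩
      · calc δ * (G.V1.card:ℝ) ≤ (1/2) * (G.V1.card:ℝ) :=
            mul_le_mul_of_nonneg_right hδhalf hc1.le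
          _ ≤ (Nb.card : ℝ) := by linarith
      · intro z hz
        have hadj : G.adj z x = true := (Finset.mem_filter.mp hz).2
        have h0 : G.deg1 z {x} = 1 := by
          rw [Bigraph.deg1, Finset.filter_singleton, if_pos hadj, Finset.card_singleton]
        rw [h0, Finset.card_singleton]
        push_cast
        nlinarith
      · intro y hy
        rw [Finset.mem_singleton.mp hy]
        have h0 : G.deg2 x Nb = Nb.card := by
          rw [Bigraph.deg2]
          congr 1
          rw [Finset.filter_eq_self]
          intro z hz
          exact (Finset.mem_filter.mp hz).2
        rw [h0]
        nlinarith
  -- both sides large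
  push_neg at hsmall1 hsmall2
  by_cases hp : ∃ A1 A2 : Finset ℕ, A1 ⊆ G.V1 ∧ A2 ⊆ G.V2 ∧
      δ * (G.V1.card : ℝ) ≤ (A1.card : ℝ) ∧ δ * (G.V2.card : ℝ) ≤ (A2.card : ℝ) ∧
      (((∀ x ∈ A1, (G.deg1 x A2 : ℝ) < ε0 * (A2.card : ℝ)) ∧
        (∀ y ∈ A2, (G.deg2 y A1 : ℝ) < ε0 * (A1.card : ℝ))) ∨
       ((∀ x ∈ A1, (1 - ε0) * (A2.card : ℝ) < (G.deg1 x A2 : ℝ)) ∧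
        (∀ y ∈ A2, (1 - ε0) * (A1.card : ℝ) < (G.deg2 y A1 : ℝ))))
  · obtain ⟨A1, A2, s1, s2, sc1, sc2, hor⟩ := hp
    refine ⟨A1, A2, s1, s2, sc1, sc2, ?_⟩
    rcases hor with ⟨h1, h2⟩ | ⟨h1, h2⟩
    · left
      constructor
      · intro x hx
        calc (G.deg1 x A2 : ℝ) < ε0 * A2.card := h1 x hx
          _ ≤ ε * A2.card := mul_le_mul_of_nonneg_right hε0ε (Nat.cast_nonneg _)
      · intro y hy
        calc (G.deg2 y A1 : ℝ) < ε0 * A1.card := h2 y hy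
          _ ≤ ε * A1.card := mul_le_mul_of_nonneg_right hε0ε (Nat.cast_nonneg _)
    · right
      constructor
      · intro x hx
        calc (1 - ε) * A2.card ≤ (1 - ε0) * A2.card :=
              mul_le_mul_of_nonneg_right (by linarith) (Nat.cast_nonneg _)
          _ < _ := h1 x hx
      · intro y hy
        calc (1 - ε) * A1.card ≤ (1 - ε0) * A1.card :=
              mul_le_mul_of_nonneg_right (by linarith) (Nat.cast_nonneg _)
          _ < _ := h2 y hy
  · -- no pair: embed H, contradiction
    exfalso
    have NP : NoPair G ε0 δ := by
      intro A1 A2 s1 s2 sc1 sc2 hcontra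
      exact hp ⟨A1, A2, s1, s2, sc1, sc2, hcontra⟩
    refine hG (bigcase G H ε0 δ K hε0 hε01 hδpos ?_ hK1 (by omega) hc1 hc2 ?_ ?_ NP)
    · rw [hδdef, hd0def, hqdef]
      exact min_le_left _ _
    · rw [← hpdef, ← hTdef]; exact hsmall1
    · rw [← hpdef, ← hTdef]; exact hsmall2
end

section
/- For all c, ε, τ > 0 with ε < τ ≤ 8/9 there exists δ > 0 with the following property. Let G be a bigraph with at most (1−τ)|V1(G)|·|V2(G)| edges and with V1(G), V2(G) nonempty. Then there exist Zi ⊆ Vi(G) with |Zi| ≥ δ|Vi(G)| for i = 1,2, such that for all subsets Yi ⊆ Zi with |Yi| ≥ c|Zi| for i = 1,2, the number of edges between Y1 and Y2 is less than (1−ε)|Y1|·|Y2|. -/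
private lemma bigraph_edgeCount_le (G : Bigraph) (X Y : Finset ℕ) :
    G.edgeCount X Y ≤ X.card * Y.card :=
  calc G.edgeCount X Y ≤ ∑ _x ∈ X, Y.card :=
        Finset.sum_le_sum fun x _ => Finset.card_filter_le _ _
    _ = X.card * Y.card := by rw [Finset.sum_const, smul_eq_mul]

private lemma bigraph_split_left (G : Bigraph) {Y Z : Finset ℕ} (h : Y ⊆ Z) (B : Finset ℕ) :
    G.edgeCount Z B = G.edgeCount Y B + G.edgeCount (Z \ Y) B := by
  unfold Bigraph.edgeCount
  rw [← Finset.sum_union Finset.disjoint_sdiff, Finset.union_sdiff_of_subset h]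

private lemma bigraph_split_right (G : Bigraph) (A : Finset ℕ) {Y Z : Finset ℕ} (h : Y ⊆ Z) :
    G.edgeCount A Z = G.edgeCount A Y + G.edgeCount A (Z \ Y) := by
  unfold Bigraph.edgeCount
  rw [← Finset.sum_add_distrib]
  refine Finset.sum_congr rfl fun x _ => ?_
  rw [← Finset.card_union_of_disjoint (Finset.disjoint_filter_filter Finset.disjoint_sdiff),
    ← Finset.filter_union, Finset.union_sdiff_of_subset h]

/-- complement (non-edge) count, as a real number -/
private noncomputable def epR (G : Bigraph) (A B : Finset ℕ) : ℝ :=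
  (A.card : ℝ) * B.card - (G.edgeCount A B : ℝ)

private lemma epR_nonneg (G : Bigraph) (A B : Finset ℕ) : 0 ≤ epR G A B := by
  have h := bigraph_edgeCount_le G A B
  have h' : (G.edgeCount A B : ℝ) ≤ (A.card : ℝ) * B.card := by exact_mod_cast h
  simp only [epR]; linarith

private lemma epR_le (G : Bigraph) (A B : Finset ℕ) : epR G A B ≤ (A.card : ℝ) * B.card := by
  have h : (0:ℝ) ≤ G.edgeCount A B := Nat.cast_nonneg _
  simp only [epR]; linarith


set_option maxHeartbeats 4000000 in
/-- Theorem 2.3 of the paper: in a bigraph that is not too dense one can find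
linear-sized `Z1, Z2` such that all linear-sized subsets of them are not too dense. -/
theorem stmt1 (c ε τ : ℝ) (hc : 0 < c) (hε : 0 < ε) (hετ : ε < τ) (hτ : τ ≤ 8 / 9) :
    ∃ δ : ℝ, 0 < δ ∧ ∀ G : Bigraph,
      (G.edgeCount G.V1 G.V2 : ℝ) ≤ (1 - τ) * (G.V1.card : ℝ) * (G.V2.card : ℝ) →
      G.V1.Nonempty → G.V2.Nonempty →
      ∃ Z1 Z2 : Finset ℕ, Z1 ⊆ G.V1 ∧ Z2 ⊆ G.V2 ∧
        δ * (G.V1.card : ℝ) ≤ (Z1.card : ℝ) ∧ δ * (G.V2.card : ℝ) ≤ (Z2.card : ℝ) ∧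
        ∀ Y1 Y2 : Finset ℕ, Y1 ⊆ Z1 → Y2 ⊆ Z2 →
          c * (Z1.card : ℝ) ≤ (Y1.card : ℝ) → c * (Z2.card : ℝ) ≤ (Y2.card : ℝ) →
          (G.edgeCount Y1 Y2 : ℝ) < (1 - ε) * (Y1.card : ℝ) * (Y2.card : ℝ) := by
  have hτ0 : 0 < τ := hε.trans hετ
  have hτε : 0 < τ - ε := sub_pos.2 hετ
  set c' : ℝ := min c 1 with hc'def
  have hc'0 : 0 < c' := lt_min hc one_pos
  have hc'1 : c' ≤ 1 := min_le_right _ _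
  have hc'c : c' ≤ c := min_le_left _ _
  set L : ℝ := Real.log c'⁻¹ with hLdef
  have hL0 : 0 ≤ L := Real.log_nonneg (one_le_inv_iff₀.2 ⟨hc'0, hc'1⟩)
  set γ : ℝ := min (1/2) (min (1/(2*(L+1))) (c'*(τ-ε)/(τ*(2*L+4)*2))) with hγdef
  have hγ0 : 0 < γ :=
    lt_min one_half_pos (lt_min (by positivity) (by positivity))
  have hγh : γ ≤ 1/2 := min_le_left _ _
  have hγ1 : γ ≤ 1 := hγh.trans (by norm_num)
  have hγL : γ * L ≤ 1/2 := by
    have h1 : γ ≤ 1/(2*(L+1)) := le_trans (min_le_right _ _) (min_le_left _ _)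
    have h2 : γ * L ≤ (1/(2*(L+1))) * L := mul_le_mul_of_nonneg_right h1 hL0
    have h3 : (1/(2*(L+1))) * L ≤ 1/2 := by
      rw [div_mul_eq_mul_div, div_le_div_iff₀ (by positivity) (by norm_num)]
      linarith
    linarith
  have hγ3 : τ*γ*(2*L+4) ≤ c'*(τ-ε)/2 := by
    have h1 : γ ≤ c'*(τ-ε)/(τ*(2*L+4)*2) := le_trans (min_le_right _ _) (min_le_right _ _)
    rw [le_div_iff₀ (by positivity)] at h1
    linarith
  have hτγε : ε < τ*(1-γ) := by
    linarith [mul_nonneg (mul_nonneg hτ0.le hγ0.le) hL0,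
      mul_nonneg (sub_nonneg.2 hc'1) hτε.le]
  set K : ℝ := c' ^ (-γ) with hKdef
  have hKexp : K = Real.exp (γ * L) := by
    rw [hKdef, Real.rpow_def_of_pos hc'0, hLdef, Real.log_inv]
    ring_nf
  have hK1 : 1 ≤ K := by
    rw [hKexp]
    have h := Real.add_one_le_exp (γ*L)
    linarith [mul_nonneg hγ0.le hL0]
  have hKL : K ≤ 1 + 2*(γ*L) := by
    have hx0 : 0 ≤ γ*L := mul_nonneg hγ0.le hL0
    have he : Real.exp (γ*L) * Real.exp (-(γ*L)) = 1 := by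
      rw [← Real.exp_add]; simp
    have h3 : 1 - γ*L ≤ Real.exp (-(γ*L)) := by
      have := Real.add_one_le_exp (-(γ*L)); linarith
    have h4 := mul_le_mul_of_nonneg_left h3 (Real.exp_pos (γ*L)).le
    have h5 : (1:ℝ) ≤ (1+2*(γ*L))*(1-γ*L) := by nlinarith [mul_nonneg hx0 (by linarith : (0:ℝ) ≤ 1 - 2*(γ*L))]
    have h6 : (0:ℝ) < 1-γ*L := by linarith
    rw [hKexp]
    nlinarith [h4, he, h5, h6, Real.exp_pos (γ*L)]
  have hK2 : K ≤ 2 := by linarith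
  clear_value c' L γ K
  refine ⟨τ ^ (1/γ), Real.rpow_pos_of_pos hτ0 _, ?_⟩
  intro G hEdge hV1 hV2
  set N1 : ℝ := (G.V1.card : ℝ) with hN1def
  set N2 : ℝ := (G.V2.card : ℝ) with hN2def
  have hN1 : 0 < N1 := by rw [hN1def]; exact_mod_cast Finset.card_pos.2 hV1
  have hN2 : 0 < N2 := by rw [hN2def]; exact_mod_cast Finset.card_pos.2 hV2
  clear_value N1 N2
  have hpow : ∀ x : ℝ, 0 < x → x ^ (γ-1) = x^γ / x := fun x hx => by
    rw [Real.rpow_sub hx, Real.rpow_one]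
  have hpow2 : ∀ x : ℝ, 0 < x → x ^ (1-γ) = x / x^γ := fun x hx => by
    rw [Real.rpow_sub hx, Real.rpow_one]
  set φ : Finset ℕ × Finset ℕ → ℝ :=
    fun p => epR G p.1 p.2 * ((p.1.card:ℝ)^(γ-1) * (p.2.card:ℝ)^(γ-1)) with hφdef
  set P : Finset (Finset ℕ × Finset ℕ) :=
    (G.V1.powerset ×ˢ G.V2.powerset).filter (fun p => p.1.Nonempty ∧ p.2.Nonempty) with hPdef
  clear_value φ P
  have hmemP : ∀ A B : Finset ℕ, A ⊆ G.V1 → B ⊆ G.V2 → A.Nonempty → B.Nonempty →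
      (A,B) ∈ P := by
    intro A B h1 h2 h3 h4
    simp only [hPdef, Finset.mem_filter, Finset.mem_product, Finset.mem_powerset]
    exact ⟨⟨h1, h2⟩, h3, h4⟩
  obtain ⟨p, hpP, hmax⟩ := P.exists_max_image φ
    ⟨(G.V1, G.V2), hmemP _ _ (subset_refl _) (subset_refl _) hV1 hV2⟩
  obtain ⟨Z1, Z2⟩ := p
  simp only [hPdef, Finset.mem_filter, Finset.mem_product, Finset.mem_powerset] at hpP
  obtain ⟨⟨hZ1V, hZ2V⟩, hZ1ne, hZ2ne⟩ := hpP
  set z1 : ℝ := (Z1.card : ℝ) with hz1def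
  set z2 : ℝ := (Z2.card : ℝ) with hz2def
  have hz1 : 0 < z1 := by rw [hz1def]; exact_mod_cast Finset.card_pos.2 hZ1ne
  have hz2 : 0 < z2 := by rw [hz2def]; exact_mod_cast Finset.card_pos.2 hZ2ne
  clear_value z1 z2
  have hz1N : z1 ≤ N1 := by rw [hz1def, hN1def]; exact_mod_cast Finset.card_le_card hZ1V
  have hz2N : z2 ≤ N2 := by rw [hz2def, hN2def]; exact_mod_cast Finset.card_le_card hZ2V
  -- the maximum value, lower bound from (V1, V2)
  have hepV : τ * (N1*N2) ≤ epR G G.V1 G.V2 := by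
    simp only [epR, ← hN1def, ← hN2def]
    linarith
  have hMV : τ * (N1^γ * N2^γ) ≤ epR G Z1 Z2 * (z1^γ/z1 * (z2^γ/z2)) := by
    have h1 := hmax (G.V1, G.V2) (hmemP _ _ (subset_refl _) (subset_refl _) hV1 hV2)
    simp only [hφdef, ← hN1def, ← hN2def, ← hz1def, ← hz2def] at h1
    rw [hpow N1 hN1, hpow N2 hN2, hpow z1 hz1, hpow z2 hz2] at h1
    have h2 : τ * (N1^γ * N2^γ) = τ*(N1*N2) * (N1^γ/N1 * (N2^γ/N2)) := by
      field_simp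
    have h3 : τ*(N1*N2) * (N1^γ/N1 * (N2^γ/N2)) ≤ epR G G.V1 G.V2 * (N1^γ/N1 * (N2^γ/N2)) :=
      mul_le_mul_of_nonneg_right hepV (by positivity)
    linarith
  -- upper bound on the maximum
  have hepRle : epR G Z1 Z2 ≤ z1*z2 := by
    have h := epR_le G Z1 Z2
    rw [← hz1def, ← hz2def] at h
    exact h
  have hMle : epR G Z1 Z2 * (z1^γ/z1 * (z2^γ/z2)) ≤ z1^γ * z2^γ := by
    have hf : (0:ℝ) ≤ z1^γ/z1 * (z2^γ/z2) := by positivity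
    have h1 : epR G Z1 Z2 * (z1^γ/z1 * (z2^γ/z2)) ≤ (z1*z2) * (z1^γ/z1 * (z2^γ/z2)) :=
      mul_le_mul_of_nonneg_right hepRle hf
    have h2 : (z1*z2) * (z1^γ/z1 * (z2^γ/z2)) = z1^γ * z2^γ := by field_simp; try ring
    linarith
  -- size bounds
  have hτN1 : τ * N1^γ ≤ z1^γ := by
    have h1 : τ * (N1^γ * N2^γ) ≤ z1^γ * z2^γ := le_trans hMV hMle
    have h2 : z2^γ ≤ N2^γ := Real.rpow_le_rpow hz2.le hz2N hγ0.le
    have h3 : z1^γ * z2^γ ≤ z1^γ * N2^γ :=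
      mul_le_mul_of_nonneg_left h2 (Real.rpow_nonneg hz1.le _)
    have h4 : 0 < N2^γ := Real.rpow_pos_of_pos hN2 _
    have h5 : τ * N1^γ * N2^γ ≤ z1^γ * N2^γ := by linarith
    exact le_of_mul_le_mul_right h5 h4
  have hτN2 : τ * N2^γ ≤ z2^γ := by
    have h1 : τ * (N1^γ * N2^γ) ≤ z1^γ * z2^γ := le_trans hMV hMle
    have h2 : z1^γ ≤ N1^γ := Real.rpow_le_rpow hz1.le hz1N hγ0.le
    have h3 : z1^γ * z2^γ ≤ N1^γ * z2^γ :=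
      mul_le_mul_of_nonneg_right h2 (Real.rpow_nonneg hz2.le _)
    have h4 : 0 < N1^γ := Real.rpow_pos_of_pos hN1 _
    have h5 : N1^γ * (τ * N2^γ) ≤ N1^γ * z2^γ := by linarith
    exact le_of_mul_le_mul_left h5 h4
  have hsize1 : τ ^ (1/γ) * N1 ≤ z1 := by
    by_contra h
    push_neg at h
    have h1 : z1^γ < (τ ^ (1/γ) * N1)^γ := Real.rpow_lt_rpow hz1.le h hγ0
    rw [Real.mul_rpow (Real.rpow_nonneg hτ0.le _) hN1.le, ← Real.rpow_mul hτ0.le,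
      one_div_mul_cancel hγ0.ne', Real.rpow_one] at h1
    linarith
  have hsize2 : τ ^ (1/γ) * N2 ≤ z2 := by
    by_contra h
    push_neg at h
    have h1 : z2^γ < (τ ^ (1/γ) * N2)^γ := Real.rpow_lt_rpow hz2.le h hγ0
    rw [Real.mul_rpow (Real.rpow_nonneg hτ0.le _) hN2.le, ← Real.rpow_mul hτ0.le,
      one_div_mul_cancel hγ0.ne', Real.rpow_one] at h1
    linarith
  -- density lower bound of the maximizer
  have hepZ : τ * (z1*z2) ≤ epR G Z1 Z2 := by
    have h2 : z1^γ ≤ N1^γ := Real.rpow_le_rpow hz1.le hz1N hγ0.le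
    have h2' : z2^γ ≤ N2^γ := Real.rpow_le_rpow hz2.le hz2N hγ0.le
    have hz1γ : 0 < z1^γ := Real.rpow_pos_of_pos hz1 _
    have hz2γ : 0 < z2^γ := Real.rpow_pos_of_pos hz2 _
    have h5 : τ * (z1^γ * z2^γ) ≤ epR G Z1 Z2 * (z1^γ/z1 * (z2^γ/z2)) := by
      have hprod : z1^γ * z2^γ ≤ N1^γ * N2^γ :=
        mul_le_mul h2 h2' hz2γ.le (Real.rpow_nonneg hN1.le _)
      have h : τ * (z1^γ * z2^γ) ≤ τ * (N1^γ * N2^γ) :=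
        mul_le_mul_of_nonneg_left hprod hτ0.le
      linarith
    have hrw : epR G Z1 Z2 * (z1^γ/z1 * (z2^γ/z2))
        = (epR G Z1 Z2/(z1*z2)) * (z1^γ * z2^γ) := by field_simp; try ring
    rw [hrw] at h5
    have h6 : τ ≤ epR G Z1 Z2/(z1*z2) := by
      have := le_of_mul_le_mul_right
        (by linarith : τ * (z1^γ * z2^γ) ≤ (epR G Z1 Z2/(z1*z2)) * (z1^γ * z2^γ))
        (by positivity : 0 < z1^γ * z2^γ)
      linarith
    rw [le_div_iff₀ (by positivity)] at h6
    linarith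
  rw [hz1def] at hsize1
  rw [hz2def] at hsize2
  refine ⟨Z1, Z2, hZ1V, hZ2V, hsize1, hsize2, ?_⟩
  intro Y1 Y2 hY1 hY2 hcY1 hcY2
  rw [← hz1def] at hcY1
  rw [← hz2def] at hcY2
  set y1 : ℝ := (Y1.card : ℝ) with hy1def
  set y2 : ℝ := (Y2.card : ℝ) with hy2def
  have hy1z : y1 ≤ z1 := by rw [hy1def, hz1def]; exact_mod_cast Finset.card_le_card hY1
  have hy2z : y2 ≤ z2 := by rw [hy2def, hz2def]; exact_mod_cast Finset.card_le_card hY2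
  have hy1c : c'*z1 ≤ y1 := le_trans (mul_le_mul_of_nonneg_right hc'c hz1.le) hcY1
  have hy2c : c'*z2 ≤ y2 := le_trans (mul_le_mul_of_nonneg_right hc'c hz2.le) hcY2
  have hy1 : 0 < y1 := lt_of_lt_of_le (by positivity) hy1c
  have hy2 : 0 < y2 := lt_of_lt_of_le (by positivity) hy2c
  have hY1ne : Y1.Nonempty := by
    have h := hy1
    rw [hy1def] at h
    exact Finset.card_pos.1 (by exact_mod_cast h)
  set s : ℝ := y1/z1 with hsdef
  set t : ℝ := y2/z2 with htdef
  have hs0 : 0 < s := div_pos hy1 hz1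
  have ht0 : 0 < t := div_pos hy2 hz2
  have hs1 : s ≤ 1 := (div_le_one hz1).2 hy1z
  have ht1 : t ≤ 1 := (div_le_one hz2).2 hy2z
  have hsc : c' ≤ s := (le_div_iff₀ hz1).2 (by linarith)
  have htc : c' ≤ t := (le_div_iff₀ hz2).2 (by linarith)
  clear_value y1 y2 s t
  have hw1 : ((Z1\Y1).card : ℝ) = z1 - y1 := by
    rw [Finset.card_sdiff_of_subset hY1, Nat.cast_sub (Finset.card_le_card hY1), hz1def, hy1def]
  have hw2 : ((Z2\Y2).card : ℝ) = z2 - y2 := by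
    rw [Finset.card_sdiff_of_subset hY2, Nat.cast_sub (Finset.card_le_card hY2), hz2def, hy2def]
  -- bound on ep of (Z1\Y1, Z2)
  have hfac1 : 0 ≤ (1-γ)*(1-s)+γ :=
    add_nonneg (mul_nonneg (by linarith) (by linarith)) hγ0.le
  have hfac2 : 0 ≤ (1-γ)*(1-t)+γ :=
    add_nonneg (mul_nonneg (by linarith) (by linarith)) hγ0.le
  have hA : epR G (Z1\Y1) Z2 ≤ epR G Z1 Z2 * ((1-γ)*(1-s) + γ) := by
    rcases Finset.eq_empty_or_nonempty (Z1\Y1) with hEmpty | hNe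
    · rw [hEmpty]
      have hz : epR G ∅ Z2 = 0 := by simp [epR, Bigraph.edgeCount]
      rw [hz]
      exact mul_nonneg (epR_nonneg G _ _) hfac1
    · have hmem := hmax (Z1\Y1, Z2)
        (hmemP _ _ (Finset.Subset.trans (Finset.sdiff_subset) hZ1V) hZ2V hNe hZ2ne)
      set w1 : ℝ := ((Z1\Y1).card : ℝ) with hw1def
      have hw1pos : 0 < w1 := by rw [hw1def]; exact_mod_cast Finset.card_pos.2 hNe
      simp only [hφdef, ← hz1def, ← hz2def, ← hw1def] at hmem
      rw [hpow w1 hw1pos, hpow z1 hz1, hpow z2 hz2] at hmem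
      have hz2f : 0 < z2^γ/z2 := by positivity
      have h5 : epR G (Z1\Y1) Z2 * (w1^γ/w1) ≤ epR G Z1 Z2 * (z1^γ/z1) := by
        have h5' : epR G (Z1\Y1) Z2 * (w1^γ/w1) * (z2^γ/z2)
            ≤ epR G Z1 Z2 * (z1^γ/z1) * (z2^γ/z2) := by
          rw [mul_assoc, mul_assoc]; exact hmem
        exact le_of_mul_le_mul_right h5' hz2f
      have hw1γ : 0 < w1^γ := Real.rpow_pos_of_pos hw1pos _
      have h6 : epR G (Z1\Y1) Z2 ≤ epR G Z1 Z2 * (z1^γ/z1) * (w1/w1^γ) := by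
        have h6' := mul_le_mul_of_nonneg_right h5 (le_of_lt (div_pos hw1pos hw1γ))
        have hid : epR G (Z1\Y1) Z2 * (w1^γ/w1) * (w1/w1^γ) = epR G (Z1\Y1) Z2 := by
          field_simp
        rw [hid] at h6'
        exact h6'
      have h7 : (w1/z1)^(1-γ) = (z1^γ/z1)*(w1/w1^γ) := by
        rw [Real.div_rpow hw1pos.le hz1.le, hpow2 w1 hw1pos, hpow2 z1 hz1]
        field_simp
      have h8 : (w1/z1)^(1-γ) ≤ (1-γ)*(w1/z1) + γ := by
        have h8' := Real.geom_mean_le_arith_mean2_weighted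
          (by linarith : (0:ℝ) ≤ 1-γ) hγ0.le (by positivity : (0:ℝ) ≤ w1/z1)
          (zero_le_one) (by ring)
        simpa using h8'
      have h9 : w1/z1 = 1-s := by
        rw [hw1, hsdef, sub_div, div_self hz1.ne']
      calc epR G (Z1\Y1) Z2 ≤ epR G Z1 Z2 * ((z1^γ/z1)*(w1/w1^γ)) := by
            rw [← mul_assoc]; exact h6
        _ = epR G Z1 Z2 * ((w1/z1)^(1-γ)) := by rw [h7]
        _ ≤ epR G Z1 Z2 * ((1-γ)*(1-s) + γ) := by
            refine mul_le_mul_of_nonneg_left ?_ (epR_nonneg G _ _)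
            rw [← h9]; exact h8
  -- bound on ep of (Y1, Z2\Y2)
  have hB : epR G Y1 (Z2\Y2) ≤ epR G Z1 Z2 * (K*s*((1-γ)*(1-t) + γ)) := by
    rcases Finset.eq_empty_or_nonempty (Z2\Y2) with hEmpty | hNe
    · rw [hEmpty]
      have hz : epR G Y1 ∅ = 0 := by simp [epR, Bigraph.edgeCount]
      rw [hz]
      have hK0 : (0:ℝ) < K := lt_of_lt_of_le one_pos hK1
      exact mul_nonneg (epR_nonneg G _ _)
        (mul_nonneg (mul_nonneg hK0.le hs0.le) hfac2)
    · have hmem := hmax (Y1, Z2\Y2)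
        (hmemP _ _ (Finset.Subset.trans hY1 hZ1V)
          (Finset.Subset.trans (Finset.sdiff_subset) hZ2V) hY1ne hNe)
      set w2 : ℝ := ((Z2\Y2).card : ℝ) with hw2def
      have hw2pos : 0 < w2 := by rw [hw2def]; exact_mod_cast Finset.card_pos.2 hNe
      simp only [hφdef, ← hz1def, ← hz2def, ← hw2def, ← hy1def] at hmem
      rw [hpow w2 hw2pos, hpow z1 hz1, hpow z2 hz2, hpow y1 hy1] at hmem
      have hy1γ : 0 < y1^γ := Real.rpow_pos_of_pos hy1 _
      have hw2γ : 0 < w2^γ := Real.rpow_pos_of_pos hw2pos _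
      have h6 : epR G Y1 (Z2\Y2)
          ≤ epR G Z1 Z2 * ((z1^γ/z1)*(y1/y1^γ)) * ((z2^γ/z2)*(w2/w2^γ)) := by
        have h6' := mul_le_mul_of_nonneg_right hmem
          (le_of_lt (mul_pos (div_pos hy1 hy1γ) (div_pos hw2pos hw2γ)))
        have hid : epR G Y1 (Z2\Y2) * (y1^γ/y1 * (w2^γ/w2)) * (y1/y1^γ * (w2/w2^γ))
            = epR G Y1 (Z2\Y2) := by field_simp
        rw [hid] at h6'
        calc epR G Y1 (Z2\Y2)
            ≤ epR G Z1 Z2 * (z1^γ/z1 * (z2^γ/z2)) * (y1/y1^γ * (w2/w2^γ)) := h6'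
          _ = epR G Z1 Z2 * ((z1^γ/z1)*(y1/y1^γ)) * ((z2^γ/z2)*(w2/w2^γ)) := by ring
      have h7a : (y1/z1)^(1-γ) = (z1^γ/z1)*(y1/y1^γ) := by
        rw [Real.div_rpow hy1.le hz1.le, hpow2 y1 hy1, hpow2 z1 hz1]
        field_simp
      have h7b : (w2/z2)^(1-γ) = (z2^γ/z2)*(w2/w2^γ) := by
        rw [Real.div_rpow hw2pos.le hz2.le, hpow2 w2 hw2pos, hpow2 z2 hz2]
        field_simp
      have h8a : (y1/z1)^(1-γ) ≤ K*s := by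
        have hKs : s^(-γ) ≤ K := by
          rw [hKdef]
          exact Real.rpow_le_rpow_of_nonpos hc'0 hsc (neg_nonpos.2 hγ0.le)
        have hsplit : s^(1-γ) = s * s^(-γ) := by
          rw [Real.rpow_neg hs0.le, Real.rpow_sub hs0, Real.rpow_one, div_eq_mul_inv]
        have : s^(1-γ) ≤ s * K := by
          rw [hsplit]; exact mul_le_mul_of_nonneg_left hKs hs0.le
        rw [hsdef] at this ⊢
        linarith
      have h8b : (w2/z2)^(1-γ) ≤ (1-γ)*(1-t) + γ := by
        have h9 : w2/z2 = 1-t := by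
          rw [hw2, htdef, sub_div, div_self hz2.ne']
        rw [h9]
        have h8' := Real.geom_mean_le_arith_mean2_weighted
          (by linarith : (0:ℝ) ≤ 1-γ) hγ0.le (by linarith : (0:ℝ) ≤ 1-t)
          (zero_le_one) (by ring)
        simpa using h8'
      have hpos1 : 0 ≤ (y1/z1)^(1-γ) := Real.rpow_nonneg (by positivity) _
      have hpos2 : 0 ≤ (w2/z2)^(1-γ) := Real.rpow_nonneg (by positivity) _
      calc epR G Y1 (Z2\Y2)
          ≤ epR G Z1 Z2 * ((y1/z1)^(1-γ)) * ((w2/z2)^(1-γ)) := by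
            rw [h7a, h7b]; exact h6
        _ ≤ epR G Z1 Z2 * (K*s) * ((1-γ)*(1-t) + γ) := by
            have e1 : epR G Z1 Z2 * ((y1/z1)^(1-γ)) * ((w2/z2)^(1-γ))
                ≤ epR G Z1 Z2 * (K*s) * ((w2/z2)^(1-γ)) :=
              mul_le_mul_of_nonneg_right
                (mul_le_mul_of_nonneg_left h8a (epR_nonneg G _ _)) hpos2
            have e2 : epR G Z1 Z2 * (K*s) * ((w2/z2)^(1-γ))
                ≤ epR G Z1 Z2 * (K*s) * ((1-γ)*(1-t) + γ) := by
              have hK0 : (0:ℝ) < K := lt_of_lt_of_le one_pos hK1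
              exact mul_le_mul_of_nonneg_left h8b
                (mul_nonneg (epR_nonneg G _ _) (mul_nonneg hK0.le hs0.le))
            linarith
        _ = epR G Z1 Z2 * (K*s*((1-γ)*(1-t) + γ)) := by ring
  -- additivity
  have hsplitY : epR G Y1 Y2 = epR G Z1 Z2 - epR G (Z1\Y1) Z2 - epR G Y1 (Z2\Y2) := by
    have e1 : (G.edgeCount Z1 Z2 : ℝ)
        = (G.edgeCount Y1 Z2 : ℝ) + (G.edgeCount (Z1\Y1) Z2 : ℝ) := by
      exact_mod_cast congrArg (Nat.cast : ℕ → ℝ) (bigraph_split_left G hY1 Z2)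
    have e2 : (G.edgeCount Y1 Z2 : ℝ)
        = (G.edgeCount Y1 Y2 : ℝ) + (G.edgeCount Y1 (Z2\Y2) : ℝ) := by
      exact_mod_cast congrArg (Nat.cast : ℕ → ℝ) (bigraph_split_right G Y1 hY2)
    simp only [epR, hw1, hw2, ← hz1def, ← hz2def, ← hy1def, ← hy2def]
    linear_combination e2 + e1
  -- the pure real inequality
  have hGpos : ε*t < τ*((1-γ) - K*((1-γ)*(1-t)+γ)) := by
    have e1 : τ*((1-γ) - K*((1-γ)*(1-t)+γ)) - ε*t
        = (t - c')*(τ*K*(1-γ) - ε)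
          + (c'*(τ*K*(1-γ) - ε) - τ*(1-γ)*(K-1) - τ*K*γ) := by ring
    have hτ1γ : 0 ≤ τ*(1-γ) := mul_nonneg hτ0.le (by linarith)
    have h1 : 0 ≤ (t-c')*(τ*K*(1-γ)-ε) := by
      refine mul_nonneg (by linarith) ?_
      linarith [mul_nonneg (sub_nonneg.2 hK1) hτ1γ]
    have h2 : τ*(1-γ)*(K-1) ≤ 2*τ*γ*L := by
      linarith [mul_nonneg (mul_nonneg hτ0.le hγ0.le) (sub_nonneg.2 hK1),
        mul_le_mul_of_nonneg_left (by linarith [hKL] : K-1 ≤ 2*(γ*L)) hτ0.le]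
    have h3 : τ*K*γ ≤ 2*τ*γ := by
      linarith [mul_nonneg (mul_nonneg hτ0.le hγ0.le) (by linarith : (0:ℝ) ≤ 2-K)]
    have h4 : c'*(τ-ε) - τ*γ ≤ c'*(τ*K*(1-γ)-ε) := by
      linarith [mul_nonneg (sub_nonneg.2 hK1)
          (mul_nonneg (mul_nonneg hc'0.le hτ0.le) (by linarith : (0:ℝ) ≤ 1-γ)),
        mul_nonneg (sub_nonneg.2 hc'1) (mul_nonneg hτ0.le hγ0.le)]
    linarith [e1, h1, h2, h3, h4, hγ3, mul_pos hc'0 hτε,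
      mul_nonneg (mul_nonneg hτ0.le hγ0.le) hL0, mul_nonneg hτ0.le hγ0.le]
  have hbr : 0 < (1-γ) - K*((1-γ)*(1-t)+γ) := by
    have het : 0 < ε*t := mul_pos hε ht0
    by_contra hX
    push_neg at hX
    have h0 : τ*((1-γ) - K*((1-γ)*(1-t)+γ)) ≤ 0 :=
      mul_nonpos_of_nonneg_of_nonpos hτ0.le hX
    linarith
  have hF0 : 0 ≤ 1 - ((1-γ)*(1-s)+γ) - K*s*((1-γ)*(1-t)+γ) := by
    have hid : 1 - ((1-γ)*(1-s)+γ) - K*s*((1-γ)*(1-t)+γ)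
        = s*((1-γ) - K*((1-γ)*(1-t)+γ)) := by ring
    rw [hid]
    exact mul_nonneg hs0.le hbr.le
  have hF : epR G Z1 Z2 * (1 - ((1-γ)*(1-s)+γ) - K*s*((1-γ)*(1-t)+γ)) ≤ epR G Y1 Y2 := by
    rw [hsplitY]
    linarith [hA, hB]
  have hy1' : y1 = s*z1 := by rw [hsdef, div_mul_cancel₀ _ hz1.ne']
  have hy2' : y2 = t*z2 := by rw [htdef, div_mul_cancel₀ _ hz2.ne']
  have hchain : ε*(y1*y2) < epR G Y1 Y2 := by
    have h1 : τ*(z1*z2)*(1 - ((1-γ)*(1-s)+γ) - K*s*((1-γ)*(1-t)+γ))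
        ≤ epR G Z1 Z2 * (1 - ((1-γ)*(1-s)+γ) - K*s*((1-γ)*(1-t)+γ)) :=
      mul_le_mul_of_nonneg_right hepZ hF0
    have h2 : ε*(y1*y2) < τ*(z1*z2)*(1 - ((1-γ)*(1-s)+γ) - K*s*((1-γ)*(1-t)+γ)) := by
      rw [hy1', hy2']
      have h3 := mul_lt_mul_of_pos_right hGpos (show (0:ℝ) < s*(z1*z2) by positivity)
      calc ε*(s*z1*(t*z2)) = (ε*t)*(s*(z1*z2)) := by ring
        _ < (τ*((1-γ) - K*((1-γ)*(1-t)+γ)))*(s*(z1*z2)) := h3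
        _ = τ*(z1*z2)*(1 - ((1-γ)*(1-s)+γ) - K*s*((1-γ)*(1-t)+γ)) := by ring
    linarith
  have hfinal : epR G Y1 Y2 = y1*y2 - (G.edgeCount Y1 Y2 : ℝ) := by
    simp only [epR, ← hy1def, ← hy2def]
  have : (G.edgeCount Y1 Y2 : ℝ) = y1*y2 - epR G Y1 Y2 := by linarith
  rw [this]
  linarith [hchain]
end

section
/- Let τ ≥ 1 be an integer, let 0 < κ ≤ 1, and let P = (A1,…,AK; B1,…,BL) be a parade in a bigraph G. Then there is a contraction P′ = (A1′,…,AK′; B1′,…,BL′) of P such that |Ai′| ≥ κ^{2^{K+L}·τ^τ}|Ai| for 1 ≤ i ≤ K and |Bj′| ≥ κ^{2^{K+L}·τ^τ}|Bj| for 1 ≤ j ≤ L, and P′ is (κ,τ)-support-invariant. -/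
/-- A parade of length `(K, L)` in a bigraph `G`. -/
structure Parade (G : Bigraph) (K L : ℕ) where
  A : Fin K → Finset ℕ
  B : Fin L → Finset ℕ
  A_sub : ∀ i, A i ⊆ G.V1
  B_sub : ∀ j, B j ⊆ G.V2
  A_ne : ∀ i, (A i).Nonempty
  B_ne : ∀ j, (B j).Nonempty
  A_disj : ∀ i i', i ≠ i' → Disjoint (A i) (A i')
  B_disj : ∀ j j', j ≠ j' → Disjoint (B j) (B j')
  A_card : ∀ i i', (A i).card = (A i').card
  B_card : ∀ j j', (B j).card = (B j').card

namespace Bigraph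

/-- A tree bigraph: underlying graph acyclic and connected on its vertex set. -/
def IsTreeBigraph (T : Bigraph) : Prop :=
  T.underlying.IsAcyclic ∧ (T.underlying.induce ↑(T.V1 ∪ T.V2)).Connected

end Bigraph

/-- `(I, J)` is in the trace of the ordered tree bigraph `T` (sides ordered by `ℕ`)
relative to the parade `P`: there is a rainbow copy of `T`, respecting the orders,
with support `(I, J)`. -/
def InTrace {G : Bigraph} {K L : ℕ} (P : Parade G K L) (T : Bigraph)
    (I : Finset (Fin K)) (J : Finset (Fin L)) : Prop :=
  ∃ (f : ℕ → ℕ) (φ : ℕ → Fin K) (ψ : ℕ → Fin L),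
    (∀ u ∈ T.V1, f u ∈ P.A (φ u)) ∧ (∀ v ∈ T.V2, f v ∈ P.B (ψ v)) ∧
    (∀ u ∈ T.V1, ∀ u' ∈ T.V1, u < u' → φ u < φ u') ∧
    (∀ v ∈ T.V2, ∀ v' ∈ T.V2, v < v' → ψ v < ψ v') ∧
    (∀ u ∈ T.V1, ∀ v ∈ T.V2, T.adj u v = G.adj (f u) (f v)) ∧
    I = T.V1.image φ ∧ J = T.V2.image ψ

/-- `P'` is a contraction of `P`. -/
def IsContraction {G : Bigraph} {K L : ℕ} (P P' : Parade G K L) : Prop :=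
  (∀ i, P'.A i ⊆ P.A i) ∧ (∀ j, P'.B j ⊆ P.B j)

/-- `P` is `(κ, τ)`-support-invariant. -/
def SupportInvariant {G : Bigraph} {K L : ℕ} (P : Parade G K L) (κ : ℝ) (τ : ℕ) : Prop :=
  ∀ P' : Parade G K L, IsContraction P P' →
    (∀ i, κ * ((P.A i).card : ℝ) ≤ ((P'.A i).card : ℝ)) →
    (∀ j, κ * ((P.B j).card : ℝ) ≤ ((P'.B j).card : ℝ)) →
    ∀ T : Bigraph, T.IsTreeBigraph → (T.V1 ∪ T.V2).card ≤ τ →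
      ∀ I J, (InTrace P T I J ↔ InTrace P' T I J)

/-- `P` is `τ`-support-uniform. -/
def SupportUniform {G : Bigraph} {K L : ℕ} (P : Parade G K L) (τ : ℕ) : Prop :=
  ∀ T : Bigraph, T.IsTreeBigraph → (T.V1 ∪ T.V2).card ≤ τ →
    (∀ I J, ¬ InTrace P T I J) ∨
    (∀ (I : Finset (Fin K)) (J : Finset (Fin L)),
       InTrace P T I J ↔ (I.card = T.V1.card ∧ J.card = T.V2.card))

/-- The set `M_v` of copies of a vertex `v` under multiplication by `a`. -/
def Mset (v a : ℕ) : Finset ℕ := (Finset.range a).image (Nat.pair v)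

/-- The bigraph obtained from `G` by `(a, b)`-multiplication. -/
def Bigraph.mult (G : Bigraph) (a b : ℕ) : Bigraph where
  V1 := G.V1.biUnion fun v => Mset v a
  V2 := G.V2.biUnion fun v => Mset v b
  disj := by
    rw [Finset.disjoint_left]
    intro x hx hx2
    simp only [Finset.mem_biUnion, Mset, Finset.mem_image, Finset.mem_range] at hx hx2
    obtain ⟨v, hv, m, _, rfl⟩ := hx
    obtain ⟨w, hw, m', _, hpair⟩ := hx2
    have hvw : w = v := by
      have h := congrArg Nat.unpair hpair
      simp only [Nat.unpair_pair, Prod.mk.injEq] at h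
      exact h.1
    exact Finset.disjoint_left.mp G.disj hv (hvw ▸ hw)
  adj := fun x y => G.adj x.unpair.1 y.unpair.1

/-- Symmetrized adjacency, as a Boolean. -/
def Bigraph.adjS (G : Bigraph) (x y : ℕ) : Bool := G.adj x y || G.adj y x

open scoped Classical in
/-- `X` `λ`-covers `Y`: at least `λ|Y|` vertices of `Y` have a neighbour in `X`. -/
def Covers (G : Bigraph) (lam : ℝ) (X Y : Finset ℕ) : Prop :=
  lam * (Y.card : ℝ) ≤ ((Y.filter fun y => ∃ x ∈ X, G.adjS x y = true).card : ℝ)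

open scoped Classical in
/-- `X` `λ`-misses `Y`: at least `λ|Y|` vertices of `Y` have no neighbour in `X`. -/
def Misses (G : Bigraph) (lam : ℝ) (X Y : Finset ℕ) : Prop :=
  lam * (Y.card : ℝ) ≤ ((Y.filter fun y => ∀ x ∈ X, ¬ G.adjS x y = true).card : ℝ)

/-- The bicomplement of a bigraph. -/
def Bigraph.bicompl (G : Bigraph) : Bigraph where
  V1 := G.V1
  V2 := G.V2
  disj := G.disj
  adj := fun x y => decide (x ∈ G.V1) && decide (y ∈ G.V2) && !(G.adj x y)


/-- `i`-th smallest element of `s` (0 default). -/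
def selt (s : Finset ℕ) (i : ℕ) : ℕ := (s.sort (· ≤ ·)).getD i 0
/-- index of `x` in the sorted list of `s`. -/
def sidx (s : Finset ℕ) (x : ℕ) : ℕ := (s.sort (· ≤ ·)).idxOf x

lemma length_sort' (s : Finset ℕ) : (s.sort (· ≤ ·)).length = s.card := Finset.length_sort _

lemma selt_mem {s : Finset ℕ} {i : ℕ} (h : i < s.card) : selt s i ∈ s := by
  have hl : i < (s.sort (· ≤ ·)).length := by rwa [length_sort']
  rw [selt, List.getD_eq_getElem _ _ hl]
  exact (Finset.mem_sort _).mp (List.getElem_mem _)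

lemma sidx_lt {s : Finset ℕ} {x : ℕ} (h : x ∈ s) : sidx s x < s.card := by
  rw [sidx, ← length_sort' s]
  exact List.idxOf_lt_length_iff.mpr ((Finset.mem_sort _).mpr h)

lemma selt_sidx {s : Finset ℕ} {x : ℕ} (h : x ∈ s) : selt s (sidx s x) = x := by
  have hl : sidx s x < (s.sort (· ≤ ·)).length :=
    List.idxOf_lt_length_iff.mpr ((Finset.mem_sort _).mpr h)
  rw [selt, List.getD_eq_getElem _ _ hl]
  exact List.getElem_idxOf hl

lemma sidx_selt {s : Finset ℕ} {i : ℕ} (h : i < s.card) : sidx s (selt s i) = i := by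
  have hl : i < (s.sort (· ≤ ·)).length := by rwa [length_sort']
  rw [selt, sidx, List.getD_eq_getElem _ _ hl]
  exact (s.sort_nodup _).idxOf_getElem _ _

lemma selt_strictMono {s : Finset ℕ} {i j : ℕ} (hij : i < j) (h : j < s.card) :
    selt s i < selt s j := by
  have hj : j < (s.sort (· ≤ ·)).length := by rwa [length_sort']
  have hi : i < (s.sort (· ≤ ·)).length := lt_trans hij hj
  rw [selt, selt, List.getD_eq_getElem _ _ hi, List.getD_eq_getElem _ _ hj]
  exact List.pairwise_iff_getElem.mp (List.sortedLT_iff_pairwise.mp (Finset.sortedLT_sort s)) i j hi hj hij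

lemma sidx_strictMono {s : Finset ℕ} {x y : ℕ} (hx : x ∈ s) (hy : y ∈ s) (hxy : x < y) :
    sidx s x < sidx s y := by
  rcases lt_trichotomy (sidx s x) (sidx s y) with h | h | h
  · exact h
  · exact absurd (by rw [← selt_sidx hx, ← selt_sidx hy, h]) hxy.ne
  · have := selt_strictMono h (sidx_lt hx)
    rw [selt_sidx hx, selt_sidx hy] at this
    exact absurd (lt_trans hxy this) (lt_irrefl _)

open SimpleGraph

open Classical in
/-- canonical parent map towards `r`. -/
noncomputable def par {V : Type*} [DecidableEq V] (H : SimpleGraph V) (r v : V) : V :=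
  if h : H.Reachable v r then ((h.some.toPath : H.Path v r) : H.Walk v r).getVert 1 else v

lemma walk_getVert_one_adj {V : Type*} {H : SimpleGraph V} {v r : V} (w : H.Walk v r)
    (hvr : v ≠ r) : H.Adj v (w.getVert 1) := by
  cases w with
  | nil => exact absurd rfl hvr
  | cons h q => rw [Walk.getVert_cons_succ, Walk.getVert_zero]; exact h

lemma par_eq_of_path {V : Type*} [DecidableEq V] {H : SimpleGraph V} (hac : H.IsAcyclic) {r v : V}
    (p : H.Path v r) : par H r v = (p : H.Walk v r).getVert 1 := by
  have h : H.Reachable v r := ⟨p.1⟩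
  rw [par, dif_pos h, hac.path_unique h.some.toPath p]

lemma par_adj {V : Type*} [DecidableEq V] {H : SimpleGraph V} (hac : H.IsAcyclic) {r v : V}
    (h : H.Reachable v r) (hvr : v ≠ r) : H.Adj v (par H r v) := by
  rw [par, dif_pos h]
  exact walk_getVert_one_adj _ hvr

lemma getVert_one_cons {V : Type*} {H : SimpleGraph V} {u v r : V} (h : H.Adj u v)
    (w : H.Walk v r) : (Walk.cons h w).getVert 1 = v := by
  rw [Walk.getVert_cons_succ, Walk.getVert_zero]

lemma adj_iff_par {V : Type*} [DecidableEq V] {H : SimpleGraph V} (hac : H.IsAcyclic)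
    (hc : H.Connected) (r u v : V) :
    H.Adj u v ↔ ((u ≠ r ∧ par H r u = v) ∨ (v ≠ r ∧ par H r v = u)) := by
  constructor
  · intro hadj
    have hne : u ≠ v := hadj.ne
    by_cases hv : v = r
    · left
      have hur : u ≠ r := hv ▸ hne
      refine ⟨hur, ?_⟩
      have hadj' : H.Adj u r := hv ▸ hadj
      have hp : (Walk.cons hadj' Walk.nil : H.Walk u r).IsPath := by
        rw [Walk.cons_isPath_iff]
        exact ⟨Walk.IsPath.nil, by simp [hur]⟩
      rw [par_eq_of_path hac ⟨_, hp⟩, getVert_one_cons, hv]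
    · by_cases hu : u = r
      · right
        refine ⟨hv, ?_⟩
        have hadj' : H.Adj v r := hu ▸ hadj.symm
        have hp : (Walk.cons hadj' Walk.nil : H.Walk v r).IsPath := by
          rw [Walk.cons_isPath_iff]
          exact ⟨Walk.IsPath.nil, by simp [hv]⟩
        rw [par_eq_of_path hac ⟨_, hp⟩, getVert_one_cons, hu]
      · obtain ⟨w⟩ := hc.preconnected v r
        set pv : H.Path v r := w.toPath with hpv
        by_cases hmem : u ∈ (pv : H.Walk v r).support
        · right
          refine ⟨hv, ?_⟩
          have hdrop : ((pv : H.Walk v r).dropUntil u hmem).IsPath :=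
            pv.2.dropUntil hmem
          have hvnot : v ∉ ((pv : H.Walk v r).dropUntil u hmem).support := by
            intro hvin
            have hspec := Walk.take_spec (pv : H.Walk v r) hmem
            have hnd : ((pv : H.Walk v r).support).Nodup := pv.2.support_nodup
            rw [← hspec, Walk.support_append] at hnd
            have hdisj := List.disjoint_of_nodup_append hnd
            have hvtake : v ∈ ((pv : H.Walk v r).takeUntil u hmem).support :=
              Walk.start_mem_support _
            rw [Walk.support_eq_cons (((pv : H.Walk v r)).dropUntil u hmem),
              List.mem_cons] at hvin
            rcases hvin with h1 | h1
            · exact hne h1.symm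
            · exact hdisj hvtake h1
          have hp : (Walk.cons hadj.symm ((pv : H.Walk v r).dropUntil u hmem)).IsPath := by
            rw [Walk.cons_isPath_iff]; exact ⟨hdrop, hvnot⟩
          rw [par_eq_of_path hac ⟨_, hp⟩, getVert_one_cons]
        · left
          refine ⟨hu, ?_⟩
          have hp : (Walk.cons hadj (pv : H.Walk v r)).IsPath := by
            rw [Walk.cons_isPath_iff]; exact ⟨pv.2, hmem⟩
          rw [par_eq_of_path hac ⟨_, hp⟩, getVert_one_cons]
  · rintro (⟨hur, hpar⟩ | ⟨hvr, hpar⟩)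
    · exact hpar ▸ par_adj hac (hc.preconnected u r) hur
    · exact (hpar ▸ par_adj hac (hc.preconnected v r) hvr).symm
namespace StmtAux

open SimpleGraph

/-- total number of vertices -/
def tt (T : Bigraph) : ℕ := T.V1.card + T.V2.card

/-- vertex set as a set -/
def bset (T : Bigraph) : Set ℕ := ↑(T.V1 ∪ T.V2)

/-- induced graph -/
def HT (T : Bigraph) : SimpleGraph (bset T) := T.underlying.induce (bset T)

def vert (T : Bigraph) (k : ℕ) : ℕ :=
  if k < T.V1.card then selt T.V1 k else selt T.V2 (k - T.V1.card)

def idx (T : Bigraph) (x : ℕ) : ℕ :=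
  if x ∈ T.V1 then sidx T.V1 x else T.V1.card + sidx T.V2 x

lemma vert_mem_union {T : Bigraph} {k : ℕ} (h : k < tt T) : vert T k ∈ T.V1 ∪ T.V2 := by
  rw [vert]
  split_ifs with h1
  · exact Finset.mem_union_left _ (selt_mem h1)
  · refine Finset.mem_union_right _ (selt_mem ?_)
    rw [tt] at h; omega

lemma idx_lt {T : Bigraph} {x : ℕ} (h : x ∈ T.V1 ∪ T.V2) : idx T x < tt T := by
  rw [idx, tt]
  rcases Finset.mem_union.mp h with h1 | h2
  · rw [if_pos h1]
    have := sidx_lt h1; omega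
  · by_cases h1 : x ∈ T.V1
    · rw [if_pos h1]; have := sidx_lt h1; omega
    · rw [if_neg h1]; have := sidx_lt h2; omega

lemma idx_vert {T : Bigraph} {k : ℕ} (h : k < tt T) : idx T (vert T k) = k := by
  rw [vert]
  split_ifs with h1
  · rw [idx, if_pos (selt_mem h1)]
    exact sidx_selt h1
  · have hk2 : k - T.V1.card < T.V2.card := by rw [tt] at h; omega
    have hmem : selt T.V2 (k - T.V1.card) ∈ T.V2 := selt_mem hk2
    have hnot : selt T.V2 (k - T.V1.card) ∉ T.V1 :=
      fun hc => (Finset.disjoint_left.mp T.disj hc) hmem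
    rw [idx, if_neg hnot, sidx_selt hk2]
    omega

lemma vert_idx {T : Bigraph} {x : ℕ} (h : x ∈ T.V1 ∪ T.V2) : vert T (idx T x) = x := by
  rw [idx]
  split_ifs with h1
  · rw [vert, if_pos (sidx_lt h1)]
    exact selt_sidx h1
  · have h2 : x ∈ T.V2 := (Finset.mem_union.mp h).resolve_left h1
    rw [vert, if_neg (by omega), Nat.add_sub_cancel_left]
    exact selt_sidx h2

lemma vert_inj {T : Bigraph} {k m : ℕ} (hk : k < tt T) (hm : m < tt T)
    (h : vert T k = vert T m) : k = m := by
  rw [← idx_vert hk, ← idx_vert hm, h]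

lemma HT_acyclic (T : Bigraph) (h : T.underlying.IsAcyclic) : (HT T).IsAcyclic := by
  intro v c hc
  let f : (HT T) ↪g T.underlying := SimpleGraph.Embedding.induce (bset T)
  exact h (c.map f.toHom) (hc.map f.injective)

lemma adj_underlying {T : Bigraph} {u v : ℕ} (hu : u ∈ T.V1) (hv : v ∈ T.V2) :
    (T.adj u v = true) ↔ T.underlying.Adj u v := by
  constructor
  · intro h; exact Or.inl ⟨hu, hv, h⟩
  · rintro (⟨_, _, h⟩ | ⟨h1, _, _⟩)
    · exact h
    · exact absurd hv (Finset.disjoint_left.mp T.disj h1)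

lemma HT_adj {T : Bigraph} (a b : bset T) : (HT T).Adj a b ↔ T.underlying.Adj ↑a ↑b :=
  Iff.rfl

noncomputable def parEnc (T : Bigraph) (k : ℕ) : ℕ :=
  if h : k < tt T then
    idx T (↑(par (HT T)
      ⟨vert T (tt T - 1), Finset.mem_coe.mpr (vert_mem_union (by omega))⟩
      ⟨vert T k, Finset.mem_coe.mpr (vert_mem_union h)⟩))
  else 0

lemma parEnc_lt {T : Bigraph} {k : ℕ} (h : k < tt T) : parEnc T k < tt T := by
  rw [parEnc, dif_pos h]
  exact idx_lt (Finset.mem_coe.mp (Subtype.mem _))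

lemma matChar {T : Bigraph} (hT : T.IsTreeBigraph) {i j : ℕ}
    (hi : i < T.V1.card) (hj : j < T.V2.card) :
    (T.adj (selt T.V1 i) (selt T.V2 j) = true) ↔
      ((i ≠ tt T - 1 ∧ parEnc T i = T.V1.card + j) ∨
       (T.V1.card + j ≠ tt T - 1 ∧ parEnc T (T.V1.card + j) = i)) := by
  have hit : i < tt T := by rw [tt]; omega
  have hjt : T.V1.card + j < tt T := by rw [tt]; omega
  have h0 : 0 < tt T := by omega
  have hvi : vert T i = selt T.V1 i := by rw [vert, if_pos hi]
  have hvj : vert T (T.V1.card + j) = selt T.V2 j := by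
    rw [vert, if_neg (by omega), Nat.add_sub_cancel_left]
  have hac : (HT T).IsAcyclic := HT_acyclic T hT.1
  have hconn : (HT T).Connected := hT.2
  set r : bset T := ⟨vert T (tt T - 1), Finset.mem_coe.mpr (vert_mem_union (by omega))⟩ with hr
  set a : bset T := ⟨vert T i, Finset.mem_coe.mpr (vert_mem_union hit)⟩ with ha
  set b : bset T := ⟨vert T (T.V1.card + j), Finset.mem_coe.mpr (vert_mem_union hjt)⟩ with hb
  have step1 : (T.adj (selt T.V1 i) (selt T.V2 j) = true) ↔ (HT T).Adj a b := by
    rw [HT_adj, ha, hb]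
    simp only [hvi, hvj]
    exact adj_underlying (selt_mem hi) (selt_mem hj)
  rw [step1, adj_iff_par hac hconn r a b]
  have hEi : parEnc T i = idx T ↑(par (HT T) r a) := by rw [parEnc, dif_pos hit]
  have hEj : parEnc T (T.V1.card + j) = idx T ↑(par (HT T) r b) := by
    rw [parEnc, dif_pos hjt]
  constructor
  · rintro (⟨hne, hp⟩ | ⟨hne, hp⟩)
    · left
      constructor
      · intro hcontra
        exact hne (Subtype.ext (show vert T i = vert T (tt T - 1) by rw [hcontra]))
      · rw [hEi, hp]
        exact idx_vert hjt
    · right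
      constructor
      · intro hcontra
        exact hne (Subtype.ext
          (show vert T (T.V1.card + j) = vert T (tt T - 1) by rw [hcontra]))
      · rw [hEj, hp]
        exact idx_vert hit
  · rintro (⟨hne, hp⟩ | ⟨hne, hp⟩)
    · left
      constructor
      · intro hcontra
        apply hne
        have : vert T i = vert T (tt T - 1) := by
          rw [hr] at hcontra
          exact congrArg Subtype.val hcontra
        exact vert_inj hit (by omega) this
      · rw [hEi] at hp
        refine Subtype.ext ?_
        have h2 := vert_idx (Finset.mem_coe.mp (Subtype.mem (par (HT T) r a)))
        rw [hp] at h2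
        exact h2.symm
    · right
      constructor
      · intro hcontra
        apply hne
        have : vert T (T.V1.card + j) = vert T (tt T - 1) := by
          rw [hr] at hcontra
          exact congrArg Subtype.val hcontra
        exact vert_inj hjt (by omega) this
      · rw [hEj] at hp
        refine Subtype.ext ?_
        have h2 := vert_idx (Finset.mem_coe.mp (Subtype.mem (par (HT T) r b)))
        rw [hp] at h2
        exact h2.symm

end StmtAux
namespace StmtAux

lemma inTrace_card {G : Bigraph} {K L : ℕ} {P : Parade G K L} {T : Bigraph}
    {I : Finset (Fin K)} {J : Finset (Fin L)} (h : InTrace P T I J) :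
    I.card = T.V1.card ∧ J.card = T.V2.card := by
  obtain ⟨f, φ, ψ, _, _, h3, h4, _, hI, hJ⟩ := h
  constructor
  · rw [hI]
    apply Finset.card_image_of_injOn
    intro u hu u' hu' heq
    by_contra hne
    rcases lt_or_gt_of_ne hne with hlt | hlt
    · exact absurd heq (h3 u (Finset.mem_coe.mp hu) u' (Finset.mem_coe.mp hu') hlt).ne
    · exact absurd heq.symm (h3 u' (Finset.mem_coe.mp hu') u (Finset.mem_coe.mp hu) hlt).ne
  · rw [hJ]
    apply Finset.card_image_of_injOn
    intro u hu u' hu' heq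
    by_contra hne
    rcases lt_or_gt_of_ne hne with hlt | hlt
    · exact absurd heq (h4 u (Finset.mem_coe.mp hu) u' (Finset.mem_coe.mp hu') hlt).ne
    · exact absurd heq.symm (h4 u' (Finset.mem_coe.mp hu') u (Finset.mem_coe.mp hu) hlt).ne

lemma inTrace_mono {G : Bigraph} {K L : ℕ} {P P' : Parade G K L}
    (hc : IsContraction P P') {T : Bigraph} {I : Finset (Fin K)} {J : Finset (Fin L)}
    (h : InTrace P' T I J) : InTrace P T I J := by
  obtain ⟨f, φ, ψ, h1, h2, h3, h4, h5, hI, hJ⟩ := h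
  exact ⟨f, φ, ψ, fun u hu => hc.1 _ (h1 u hu), fun v hv => hc.2 _ (h2 v hv),
    h3, h4, h5, hI, hJ⟩

lemma trace_transfer {G : Bigraph} {K L : ℕ} (Q : Parade G K L) (T T' : Bigraph)
    (h1 : T.V1.card = T'.V1.card) (h2 : T.V2.card = T'.V2.card)
    (hm : ∀ i < T.V1.card, ∀ j < T.V2.card,
      T.adj (selt T.V1 i) (selt T.V2 j) = T'.adj (selt T'.V1 i) (selt T'.V2 j))
    {I : Finset (Fin K)} {J : Finset (Fin L)}
    (h : InTrace Q T I J) : InTrace Q T' I J := by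
  classical
  obtain ⟨f, φ, ψ, ha1, ha2, ha3, ha4, ha5, hI, hJ⟩ := h
  set σ : ℕ → ℕ := fun x =>
    if x ∈ T'.V1 then selt T.V1 (sidx T'.V1 x)
    else if x ∈ T'.V2 then selt T.V2 (sidx T'.V2 x) else x with hσdef
  have hσ1 : ∀ u ∈ T'.V1, σ u = selt T.V1 (sidx T'.V1 u) := by
    intro u hu; simp only [hσdef, if_pos hu]
  have hσ1m : ∀ u ∈ T'.V1, σ u ∈ T.V1 := by
    intro u hu
    rw [hσ1 u hu]
    exact selt_mem (h1 ▸ sidx_lt hu)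
  have hσ2 : ∀ v ∈ T'.V2, σ v = selt T.V2 (sidx T'.V2 v) := by
    intro v hv
    have hv1 : v ∉ T'.V1 := fun hc' => Finset.disjoint_left.mp T'.disj hc' hv
    simp only [hσdef, if_neg hv1, if_pos hv]
  have hσ2m : ∀ v ∈ T'.V2, σ v ∈ T.V2 := by
    intro v hv
    rw [hσ2 v hv]
    exact selt_mem (h2 ▸ sidx_lt hv)
  have hmono1 : ∀ u ∈ T'.V1, ∀ u' ∈ T'.V1, u < u' → σ u < σ u' := by
    intro u hu u' hu' hlt
    rw [hσ1 u hu, hσ1 u' hu']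
    exact selt_strictMono (sidx_strictMono hu hu' hlt) (h1 ▸ sidx_lt hu')
  have hmono2 : ∀ v ∈ T'.V2, ∀ v' ∈ T'.V2, v < v' → σ v < σ v' := by
    intro v hv v' hv' hlt
    rw [hσ2 v hv, hσ2 v' hv']
    exact selt_strictMono (sidx_strictMono hv hv' hlt) (h2 ▸ sidx_lt hv')
  have hadj : ∀ u ∈ T'.V1, ∀ v ∈ T'.V2, T'.adj u v = T.adj (σ u) (σ v) := by
    intro u hu v hv
    have hiu : sidx T'.V1 u < T.V1.card := h1 ▸ sidx_lt hu
    have hjv : sidx T'.V2 v < T.V2.card := h2 ▸ sidx_lt hv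
    have := hm _ hiu _ hjv
    rw [selt_sidx hu, selt_sidx hv] at this
    rw [← this, hσ1 u hu, hσ2 v hv]
  have hinj1 : Set.InjOn σ ↑T'.V1 := by
    intro u hu u' hu' heq
    rw [hσ1 u (Finset.mem_coe.mp hu), hσ1 u' (Finset.mem_coe.mp hu')] at heq
    have e1 := congrArg (sidx T.V1) heq
    rw [sidx_selt (h1 ▸ sidx_lt (Finset.mem_coe.mp hu)),
      sidx_selt (h1 ▸ sidx_lt (Finset.mem_coe.mp hu'))] at e1
    have := congrArg (selt T'.V1) e1
    rwa [selt_sidx (Finset.mem_coe.mp hu), selt_sidx (Finset.mem_coe.mp hu')] at this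
  have hinj2 : Set.InjOn σ ↑T'.V2 := by
    intro u hu u' hu' heq
    rw [hσ2 u (Finset.mem_coe.mp hu), hσ2 u' (Finset.mem_coe.mp hu')] at heq
    have e1 := congrArg (sidx T.V2) heq
    rw [sidx_selt (h2 ▸ sidx_lt (Finset.mem_coe.mp hu)),
      sidx_selt (h2 ▸ sidx_lt (Finset.mem_coe.mp hu'))] at e1
    have := congrArg (selt T'.V2) e1
    rwa [selt_sidx (Finset.mem_coe.mp hu), selt_sidx (Finset.mem_coe.mp hu')] at this
  have himg1 : T'.V1.image σ = T.V1 := by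
    apply Finset.eq_of_subset_of_card_le
    · intro x hx
      obtain ⟨u, hu, rfl⟩ := Finset.mem_image.mp hx
      exact hσ1m u hu
    · rw [Finset.card_image_of_injOn hinj1, h1]
  have himg2 : T'.V2.image σ = T.V2 := by
    apply Finset.eq_of_subset_of_card_le
    · intro x hx
      obtain ⟨u, hu, rfl⟩ := Finset.mem_image.mp hx
      exact hσ2m u hu
    · rw [Finset.card_image_of_injOn hinj2, h2]
  refine ⟨fun x => f (σ x), fun x => φ (σ x), fun x => ψ (σ x), ?_, ?_, ?_, ?_, ?_, ?_, ?_⟩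
  · intro u hu; exact ha1 _ (hσ1m u hu)
  · intro v hv; exact ha2 _ (hσ2m v hv)
  · intro u hu u' hu' hlt
    exact ha3 _ (hσ1m u hu) _ (hσ1m u' hu') (hmono1 u hu u' hu' hlt)
  · intro v hv v' hv' hlt
    exact ha4 _ (hσ2m v hv) _ (hσ2m v' hv') (hmono2 v hv v' hv' hlt)
  · intro u hu v hv
    rw [hadj u hu v hv]
    exact ha5 _ (hσ1m u hu) _ (hσ2m v hv)
  · rw [hI, ← himg1, Finset.image_image]; rfl
  · rw [hJ, ← himg2, Finset.image_image]; rfl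

end StmtAux
namespace StmtAux

lemma tt_eq (T : Bigraph) : tt T = (T.V1 ∪ T.V2).card := by
  rw [tt, Finset.card_union_of_disjoint T.disj]

open Classical in
noncomputable def SP (τ : ℕ) {G : Bigraph} {K L : ℕ} (P : Parade G K L) :
    Finset (Finset (Fin K) × Finset (Fin L) × (Fin τ → Fin τ)) :=
  @Finset.filter _ (fun x => ∃ T : Bigraph, T.IsTreeBigraph ∧ (T.V1 ∪ T.V2).card ≤ τ ∧
    InTrace P T x.1 x.2.1 ∧ ∀ k : Fin τ, (x.2.2 k : ℕ) = parEnc T k % τ)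
    (Classical.decPred _) Finset.univ

lemma SP_card_le (τ : ℕ) {G : Bigraph} {K L : ℕ} (P : Parade G K L) :
    (SP τ P).card ≤ 2 ^ (K + L) * τ ^ τ := by
  calc (SP τ P).card ≤ (Finset.univ :
      Finset (Finset (Fin K) × Finset (Fin L) × (Fin τ → Fin τ))).card :=
        Finset.card_le_univ _
    _ = 2 ^ (K + L) * τ ^ τ := by
        rw [Finset.card_univ, Fintype.card_prod, Fintype.card_prod, Fintype.card_finset,
          Fintype.card_finset, Fintype.card_fun, Fintype.card_fin, Fintype.card_fin,
          Fintype.card_fin, pow_add]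
        ring

lemma SP_mono {τ : ℕ} {G : Bigraph} {K L : ℕ} {P P₁ : Parade G K L}
    (hc : IsContraction P P₁) : SP τ P₁ ⊆ SP τ P := by
  classical
  intro x hx
  rw [SP, Finset.mem_filter] at hx ⊢
  obtain ⟨hu, T, hT1, hT2, hT3, hT4⟩ := hx
  exact ⟨hu, T, hT1, hT2, inTrace_mono hc hT3, hT4⟩

lemma SP_ssubset {τ : ℕ} (hτ : 0 < τ) {G : Bigraph} {K L : ℕ} {P P₁ : Parade G K L}
    (hc : IsContraction P P₁) {T : Bigraph} (hTree : T.IsTreeBigraph)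
    (hTcard : (T.V1 ∪ T.V2).card ≤ τ) {I : Finset (Fin K)} {J : Finset (Fin L)}
    (hin : InTrace P T I J) (hnot : ¬ InTrace P₁ T I J) : SP τ P₁ ⊂ SP τ P := by
  classical
  rw [Finset.ssubset_iff_of_subset (SP_mono hc)]
  refine ⟨(I, J, fun k => ⟨parEnc T k % τ, Nat.mod_lt _ hτ⟩), ?_, ?_⟩
  · rw [SP, Finset.mem_filter]
    exact ⟨Finset.mem_univ _, T, hTree, hTcard, hin, fun k => rfl⟩
  · intro hmem
    rw [SP, Finset.mem_filter] at hmem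
    obtain ⟨-, T', hT1', hT2', hT3', hT4'⟩ := hmem
    have hcT := inTrace_card hin
    have hcT' := inTrace_card hT3'
    have h1 : T.V1.card = T'.V1.card := by rw [← hcT.1, hcT'.1]
    have h2 : T.V2.card = T'.V2.card := by rw [← hcT.2, hcT'.2]
    have htt : tt T = tt T' := by rw [tt, tt, h1, h2]
    have httτ : tt T ≤ τ := by rw [tt_eq]; exact hTcard
    have hpe : ∀ k, k < tt T → parEnc T k = parEnc T' k := by
      intro k hk
      have hkτ : k < τ := lt_of_lt_of_le hk httτ
      have := hT4' ⟨k, hkτ⟩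
      simp only at this
      have e1 : parEnc T k % τ = parEnc T' k % τ := this
      rw [Nat.mod_eq_of_lt (lt_of_lt_of_le (parEnc_lt hk) httτ),
        Nat.mod_eq_of_lt (lt_of_lt_of_le (parEnc_lt (htt ▸ hk)) (htt ▸ httτ))] at e1
      exact e1
    have hm : ∀ i < T.V1.card, ∀ j < T.V2.card,
        T.adj (selt T.V1 i) (selt T.V2 j) = T'.adj (selt T'.V1 i) (selt T'.V2 j) := by
      intro i hi j hj
      have hi' : i < T'.V1.card := h1 ▸ hi
      have hj' : j < T'.V2.card := h2 ▸ hj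
      have c1 := matChar hTree hi hj
      have c2 := matChar hT1' hi' hj'
      have hit : i < tt T := by rw [tt]; omega
      have hjt : T.V1.card + j < tt T := by rw [tt]; omega
      have hiff : (T.adj (selt T.V1 i) (selt T.V2 j) = true) ↔
          (T'.adj (selt T'.V1 i) (selt T'.V2 j) = true) := by
        rw [c1, c2, ← htt, ← h1, ← hpe i hit, ← hpe (T.V1.card + j) hjt]
      cases hb : T'.adj (selt T'.V1 i) (selt T'.V2 j) with
      | true => exact hiff.mpr hb
      | false =>
        cases hb2 : T.adj (selt T.V1 i) (selt T.V2 j) with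
        | true => rw [hb] at hiff; exact absurd (hiff.mp hb2) (by simp)
        | false => rfl
    exact hnot (trace_transfer P₁ T' T h1.symm h2.symm
      (fun i hi j hj => (hm i (h1.symm ▸ hi) j (h2.symm ▸ hj)).symm) hT3')

lemma descend (τ : ℕ) (hτ : 1 ≤ τ) (κ : ℝ) (hκ0 : 0 < κ) (hκ1 : κ ≤ 1)
    {G : Bigraph} {K L : ℕ} :
    ∀ n : ℕ, ∀ P : Parade G K L, (SP τ P).card ≤ n →
      ∃ P' : Parade G K L, IsContraction P P' ∧
        (∀ i, κ ^ n * ((P.A i).card : ℝ) ≤ ((P'.A i).card : ℝ)) ∧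
        (∀ j, κ ^ n * ((P.B j).card : ℝ) ≤ ((P'.B j).card : ℝ)) ∧
        SupportInvariant P' κ τ := by
  intro n
  induction n with
  | zero =>
    intro P hP
    by_cases hsi : SupportInvariant P κ τ
    · refine ⟨P, ⟨fun i => subset_rfl, fun j => subset_rfl⟩, ?_, ?_, hsi⟩ <;>
        · intro i; simp
    · exfalso
      rw [SupportInvariant] at hsi
      push_neg at hsi
      obtain ⟨P₁, hcontr, hA, hB, T, hTree, hTcard, I, J, hniff⟩ := hsi
      obtain ⟨hin, hnot⟩ : InTrace P T I J ∧ ¬ InTrace P₁ T I J := by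
        rcases hniff with h | ⟨hnin, hin₁⟩
        · exact h
        · exact absurd (inTrace_mono hcontr hin₁) hnin
      have := Finset.card_lt_card (SP_ssubset hτ hcontr hTree hTcard hin hnot)
      omega
  | succ m ih =>
    intro P hP
    by_cases hsi : SupportInvariant P κ τ
    · refine ⟨P, ⟨fun i => subset_rfl, fun j => subset_rfl⟩, ?_, ?_, hsi⟩ <;>
        · intro i
          calc κ ^ (m + 1) * _ ≤ 1 * _ :=
                mul_le_mul_of_nonneg_right (pow_le_one₀ hκ0.le hκ1) (Nat.cast_nonneg _)
            _ = _ := one_mul _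
    · rw [SupportInvariant] at hsi
      push_neg at hsi
      obtain ⟨P₁, hcontr, hA, hB, T, hTree, hTcard, I, J, hniff⟩ := hsi
      obtain ⟨hin, hnot⟩ : InTrace P T I J ∧ ¬ InTrace P₁ T I J := by
        rcases hniff with h | ⟨hnin, hin₁⟩
        · exact h
        · exact absurd (inTrace_mono hcontr hin₁) hnin
      have hlt := Finset.card_lt_card (SP_ssubset hτ hcontr hTree hTcard hin hnot)
      obtain ⟨P', hc', hA', hB', hsi'⟩ := ih P₁ (by omega)
      refine ⟨P', ⟨fun i => (hc'.1 i).trans (hcontr.1 i),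
        fun j => (hc'.2 j).trans (hcontr.2 j)⟩, ?_, ?_, hsi'⟩
      · intro i
        calc κ ^ (m + 1) * ((P.A i).card : ℝ) = κ ^ m * (κ * (P.A i).card) := by ring
          _ ≤ κ ^ m * ((P₁.A i).card : ℝ) :=
              mul_le_mul_of_nonneg_left (hA i) (pow_nonneg hκ0.le m)
          _ ≤ ((P'.A i).card : ℝ) := hA' i
      · intro j
        calc κ ^ (m + 1) * ((P.B j).card : ℝ) = κ ^ m * (κ * (P.B j).card) := by ring
          _ ≤ κ ^ m * ((P₁.B j).card : ℝ) :=
              mul_le_mul_of_nonneg_left (hB j) (pow_nonneg hκ0.le m)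
          _ ≤ ((P'.B j).card : ℝ) := hB' j

end StmtAux
/-- Theorem 5.1 of the paper: every parade has a contraction, with controlled loss
of width, that is `(κ, τ)`-support-invariant. -/
theorem stmt6 (τ : ℕ) (hτ : 1 ≤ τ) (κ : ℝ) (hκ0 : 0 < κ) (hκ1 : κ ≤ 1)
    (G : Bigraph) (K L : ℕ) (P : Parade G K L) :
    ∃ P' : Parade G K L, IsContraction P P' ∧
      (∀ i, κ ^ (2 ^ (K + L) * τ ^ τ) * ((P.A i).card : ℝ) ≤ ((P'.A i).card : ℝ)) ∧
      (∀ j, κ ^ (2 ^ (K + L) * τ ^ τ) * ((P.B j).card : ℝ) ≤ ((P'.B j).card : ℝ)) ∧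
      SupportInvariant P' κ τ := by
  exact StmtAux.descend τ hτ κ hκ0 hκ1 (2 ^ (K + L) * τ ^ τ) P (StmtAux.SP_card_le τ P)
end

section
/- For all integers k, τ ≥ 0 there exists an integer K ≥ 0 with the following property: every parade P of length (K,K) in a bigraph G has a sub-parade of length (k,k) that is τ-support-uniform. -/
-- === Auxiliary lemmas for stmt7 ===

open Finset in
theorem myRamsey {C : Type} [Fintype C] [Nonempty C] (n : ℕ) :
    ∀ m : ℕ, ∃ N : ℕ, ∀ c : Finset ℕ → C, ∀ A : Finset ℕ, N ≤ A.card →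
      ∃ B ⊆ A, m ≤ B.card ∧ ∃ b : C, ∀ S ⊆ B, S.card = n → c S = b := by
  induction n with
  | zero =>
    intro m
    exact ⟨m, fun c A hA => ⟨A, subset_rfl, hA, c ∅, fun S _ hS => by
      rw [Finset.card_eq_zero.mp hS]⟩⟩
  | succ n ih =>
    intro m
    choose f hf using ih
    set g : ℕ → ℕ := fun t => Nat.rec 0 (fun _ x => f x + 1) t with hg
    -- auxiliary sequence construction
    have aux : ∀ (t : ℕ) (c : Finset ℕ → C) (A : Finset ℕ), g t ≤ A.card →
        ∃ (a : ℕ → ℕ) (col : ℕ → C),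
          (∀ i j, i < j → j < t → a i < a j) ∧
          (∀ i, i < t → a i ∈ A) ∧
          (∀ i, i < t → ∀ S : Finset ℕ, S.card = n →
            (∀ x ∈ S, ∃ j, i < j ∧ j < t ∧ x = a j) →
            c (insert (a i) S) = col i) := by
      intro t
      induction t with
      | zero =>
        intro c A _
        exact ⟨fun _ => 0, fun _ => Classical.arbitrary C,
          by omega, by omega, by omega⟩
      | succ t iht =>
        intro c A hA
        have hA1 : 1 ≤ A.card := by
          have : g (t + 1) = f (g t) + 1 := rfl
          omega
        have hne : A.Nonempty := Finset.card_pos.mp hA1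
        set a0 := A.min' hne with ha0
        have ha0A : a0 ∈ A := A.min'_mem hne
        have hA' : f (g t) ≤ (A.erase a0).card := by
          rw [Finset.card_erase_of_mem ha0A]
          have : g (t + 1) = f (g t) + 1 := rfl
          omega
        obtain ⟨B, hBA, hBcard, b0, hb0⟩ :=
          hf (g t) (fun S => c (insert a0 S)) (A.erase a0) hA'
        obtain ⟨a, col, hmono, hmem, hhom⟩ := iht c B hBcard
        refine ⟨fun j => Nat.casesOn j a0 a, fun j => Nat.casesOn j b0 col, ?_, ?_, ?_⟩
        · rintro i (_ | j) hij hjt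
          · omega
          · have hjB : a j ∈ B := hmem j (by omega)
            have hjA' : a j ∈ A.erase a0 := hBA hjB
            cases i with
            | zero =>
              show a0 < a j
              have h1 : a0 ≤ a j := A.min'_le _ (Finset.mem_of_mem_erase hjA')
              have h2 : a j ≠ a0 := Finset.ne_of_mem_erase hjA'
              omega
            | succ i => show a i < a j; exact hmono i j (by omega) (by omega)
        · rintro (_ | i) hi
          · exact ha0A
          · exact Finset.mem_of_mem_erase (hBA (hmem i (by omega)))
        · rintro (_ | i) hi S hScard hSel
          · -- i = 0
            have hSB : S ⊆ B := by
              intro x hx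
              obtain ⟨j, hj0, hjt, rfl⟩ := hSel x hx
              obtain ⟨j, rfl⟩ := Nat.exists_eq_succ_of_ne_zero (by omega : j ≠ 0)
              exact hmem j (by omega)
            exact hb0 S hSB hScard
          · refine hhom i (by omega) S hScard ?_
            intro x hx
            obtain ⟨j, hj, hjt, rfl⟩ := hSel x hx
            obtain ⟨j, rfl⟩ := Nat.exists_eq_succ_of_ne_zero (by omega : j ≠ 0)
            exact ⟨j, by omega, by omega, rfl⟩
    -- main construction
    set t := Fintype.card C * m with ht
    refine ⟨g t, fun c A hA => ?_⟩
    obtain ⟨a, col, hmono, hmem, hhom⟩ := aux t c A hA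
    classical
    have hmaps : ∀ i ∈ Finset.range t, col i ∈ (Finset.univ : Finset C) :=
      fun i _ => Finset.mem_univ _
    obtain ⟨b, -, hb⟩ := Finset.exists_le_card_fiber_of_mul_le_card_of_maps_to (n := m) hmaps
      Finset.univ_nonempty (by rw [Finset.card_range, Finset.card_univ])
    set D := {i ∈ Finset.range t | col i = b} with hD
    have hDsub : D ⊆ Finset.range t := Finset.filter_subset _ _
    have hinj : Set.InjOn a ↑D := by
      intro i hi j hj hij
      simp only [Finset.mem_coe] at hi hj
      have hit := Finset.mem_range.mp (hDsub hi)
      have hjt := Finset.mem_range.mp (hDsub hj)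
      by_contra hne
      rcases Nat.lt_or_ge i j with h | h
      · have := hmono i j h hjt; omega
      · have : j < i := by omega
        have := hmono j i this hit; omega
    refine ⟨D.image a, ?_, ?_, b, ?_⟩
    · intro x hx
      obtain ⟨i, hi, rfl⟩ := Finset.mem_image.mp hx
      exact hmem i (Finset.mem_range.mp (hDsub hi))
    · rw [Finset.card_image_of_injOn hinj]; exact hb
    · intro S hSB hScard
      set T0 := {i ∈ D | a i ∈ S} with hT0
      have hT0D : T0 ⊆ D := Finset.filter_subset _ _
      have himg : T0.image a = S := by
        apply Finset.Subset.antisymm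
        · intro x hx
          obtain ⟨i, hi, rfl⟩ := Finset.mem_image.mp hx
          exact (Finset.mem_filter.mp hi).2
        · intro x hx
          obtain ⟨i, hi, rfl⟩ := Finset.mem_image.mp (hSB hx)
          exact Finset.mem_image.mpr ⟨i, Finset.mem_filter.mpr ⟨hi, hx⟩, rfl⟩
      have hT0card : T0.card = n + 1 := by
        rw [← hScard, ← himg]
        exact (Finset.card_image_of_injOn (hinj.mono (by exact_mod_cast hT0D))).symm
      have hT0ne : T0.Nonempty := Finset.card_pos.mp (by omega)
      set i0 := T0.min' hT0ne with hi0
      have hi0T : i0 ∈ T0 := T0.min'_mem hT0ne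
      have hi0D : i0 ∈ D := hT0D hi0T
      have hi0t : i0 < t := Finset.mem_range.mp (hDsub hi0D)
      have hi0S : a i0 ∈ S := (Finset.mem_filter.mp hi0T).2
      have herase : S.erase (a i0) = (T0.erase i0).image a := by
        apply Finset.Subset.antisymm
        · intro x hx
          have hxS := Finset.mem_of_mem_erase hx
          obtain ⟨i, hi, rfl⟩ := Finset.mem_image.mp (by rw [← himg] at hxS; exact hxS)
          refine Finset.mem_image.mpr ⟨i, Finset.mem_erase.mpr ⟨?_, hi⟩, rfl⟩
          rintro rfl
          exact (Finset.ne_of_mem_erase hx) rfl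
        · intro x hx
          obtain ⟨i, hi, rfl⟩ := Finset.mem_image.mp hx
          have hiT := Finset.mem_of_mem_erase hi
          refine Finset.mem_erase.mpr ⟨?_, (Finset.mem_filter.mp hiT).2⟩
          intro h
          exact (Finset.ne_of_mem_erase hi)
            (hinj (hT0D hiT) hi0D h)
      have hcard : (S.erase (a i0)).card = n := by
        rw [Finset.card_erase_of_mem hi0S, hScard]; omega
      have := hhom i0 hi0t (S.erase (a i0)) hcard ?_
      · rw [Finset.insert_erase hi0S] at this
        rw [this]
        exact (Finset.mem_filter.mp hi0D).2
      · intro x hx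
        rw [herase] at hx
        obtain ⟨j, hj, rfl⟩ := Finset.mem_image.mp hx
        have hjT := Finset.mem_of_mem_erase hj
        have hjD := hT0D hjT
        refine ⟨j, ?_, Finset.mem_range.mp (hDsub hjD), rfl⟩
        have h1 := T0.min'_le j hjT
        have h2 := Finset.ne_of_mem_erase hj
        omega

/-- Pattern-realization predicate on a parade. -/
def RealP {G : Bigraph} {K : ℕ} (P : Parade G K K) (p q : ℕ)
    (M : Fin p → Fin q → Bool) (I J : Finset ℕ) : Prop :=
  ∃ (e : Fin p → Fin K) (g : Fin q → Fin K),
    StrictMono e ∧ StrictMono g ∧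
    I = Finset.univ.image (fun α => (e α : ℕ)) ∧
    J = Finset.univ.image (fun β => (g β : ℕ)) ∧
    ∃ (x : Fin p → ℕ) (y : Fin q → ℕ),
      (∀ α, x α ∈ P.A (e α)) ∧ (∀ β, y β ∈ P.B (g β)) ∧
      ∀ α β, G.adj (x α) (y β) = M α β

lemma injOn_of_relMono {α β : Type*} [LinearOrder α] [LinearOrder β]
    {s : Finset α} {f : α → β} (hf : ∀ a ∈ s, ∀ b ∈ s, a < b → f a < f b) :
    Set.InjOn f ↑s := fun a ha b hb hab => by
      simp only [Finset.mem_coe] at ha hb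
      rcases lt_trichotomy a b with h|h|h
      · exact absurd hab (ne_of_lt (hf a ha b hb h))
      · exact h
      · exact absurd hab.symm (ne_of_lt (hf b hb a ha h))

lemma intrace_card {G : Bigraph} {k1 k2 : ℕ} {Q : Parade G k1 k2} {T : Bigraph}
    {I : Finset (Fin k1)} {J : Finset (Fin k2)} (h : InTrace Q T I J) :
    I.card = T.V1.card ∧ J.card = T.V2.card := by
  obtain ⟨f, φ, ψ, _, _, hφ, hψ, _, rfl, rfl⟩ := h
  exact ⟨Finset.card_image_of_injOn (injOn_of_relMono hφ),
    Finset.card_image_of_injOn (injOn_of_relMono hψ)⟩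

lemma intrace_iff {G : Bigraph} {k K : ℕ} (P : Parade G K K) (r s : Fin k → Fin K)
    (hr : StrictMono r) (hs : StrictMono s) (Q : Parade G k k)
    (hQA : ∀ i, Q.A i = P.A (r i)) (hQB : ∀ j, Q.B j = P.B (s j))
    (T : Bigraph) [Nonempty (Fin k)] {p q : ℕ} (hp : T.V1.card = p) (hq : T.V2.card = q)
    (I J : Finset (Fin k)) (hI : I.card = p) (hJ : J.card = q) :
    InTrace Q T I J ↔
      RealP P p q
        (fun α β => T.adj (T.V1.orderEmbOfFin hp α) (T.V2.orderEmbOfFin hq β))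
        (I.image fun i => ((r i : ℕ))) (J.image fun j => ((s j : ℕ))) := by
  classical
  have keyV1 : ∀ (w : ℕ) (h : w ∈ T.V1),
      (T.V1.orderEmbOfFin hp) ((T.V1.orderIsoOfFin hp).symm ⟨w, h⟩) = w := by
    intro w h
    rw [← Finset.coe_orderIsoOfFin_apply, OrderIso.apply_symm_apply]
  have keyV2 : ∀ (w : ℕ) (h : w ∈ T.V2),
      (T.V2.orderEmbOfFin hq) ((T.V2.orderIsoOfFin hq).symm ⟨w, h⟩) = w := by
    intro w h
    rw [← Finset.coe_orderIsoOfFin_apply, OrderIso.apply_symm_apply]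
  constructor
  · rintro ⟨f, φ, ψ, hfA, hfB, hφ, hψ, hadj, hIφ, hJψ⟩
    refine ⟨fun α => r (φ (T.V1.orderEmbOfFin hp α)),
      fun β => s (ψ (T.V2.orderEmbOfFin hq β)), ?_, ?_, ?_, ?_,
      fun α => f (T.V1.orderEmbOfFin hp α), fun β => f (T.V2.orderEmbOfFin hq β),
      ?_, ?_, ?_⟩
    · intro α α' h
      exact hr (hφ _ (Finset.orderEmbOfFin_mem _ _ _) _ (Finset.orderEmbOfFin_mem _ _ _)
        ((T.V1.orderEmbOfFin hp).strictMono h))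
    · intro β β' h
      exact hs (hψ _ (Finset.orderEmbOfFin_mem _ _ _) _ (Finset.orderEmbOfFin_mem _ _ _)
        ((T.V2.orderEmbOfFin hq).strictMono h))
    · rw [hIφ, Finset.image_image]
      ext z
      simp only [Finset.mem_image, Finset.mem_univ, true_and, Function.comp]
      constructor
      · rintro ⟨w, hw, rfl⟩
        exact ⟨(T.V1.orderIsoOfFin hp).symm ⟨w, hw⟩, by rw [keyV1 w hw]⟩
      · rintro ⟨α, rfl⟩
        exact ⟨T.V1.orderEmbOfFin hp α, Finset.orderEmbOfFin_mem _ _ _, rfl⟩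
    · rw [hJψ, Finset.image_image]
      ext z
      simp only [Finset.mem_image, Finset.mem_univ, true_and, Function.comp]
      constructor
      · rintro ⟨w, hw, rfl⟩
        exact ⟨(T.V2.orderIsoOfFin hq).symm ⟨w, hw⟩, by rw [keyV2 w hw]⟩
      · rintro ⟨β, rfl⟩
        exact ⟨T.V2.orderEmbOfFin hq β, Finset.orderEmbOfFin_mem _ _ _, rfl⟩
    · intro α
      have := hfA _ (Finset.orderEmbOfFin_mem T.V1 hp α)
      rwa [hQA] at this
    · intro β
      have := hfB _ (Finset.orderEmbOfFin_mem T.V2 hq β)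
      rwa [hQB] at this
    · intro α β
      exact (hadj _ (Finset.orderEmbOfFin_mem T.V1 hp α)
        _ (Finset.orderEmbOfFin_mem T.V2 hq β)).symm
  · rintro ⟨e, g, he, hg, hIe, hJg, x, y, hx, hy, hxy⟩
    set ι : Fin p → Fin k := fun α => I.orderEmbOfFin hI α with hι
    set κ : Fin q → Fin k := fun β => J.orderEmbOfFin hJ β with hκ
    have hI'card : (I.image fun i => ((r i : ℕ))).card = p := by
      rw [Finset.card_image_of_injOn, hI]
      intro a _ b _ h
      exact hr.injective (Fin.val_injective h)
    have hJ'card : (J.image fun j => ((s j : ℕ))).card = q := by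
      rw [Finset.card_image_of_injOn, hJ]
      intro a _ b _ h
      exact hs.injective (Fin.val_injective h)
    have hre : ∀ α, r (ι α) = e α := by
      have e1 := Finset.orderEmbOfFin_unique hI'card
        (f := fun α => ((r (ι α) : ℕ)))
        (fun α => Finset.mem_image.mpr ⟨ι α, Finset.orderEmbOfFin_mem _ _ _, rfl⟩)
        (fun a b h => by
          have : r (ι a) < r (ι b) := hr ((I.orderEmbOfFin hI).strictMono h)
          exact_mod_cast this)
      have e2 := Finset.orderEmbOfFin_unique hI'card
        (f := fun α => ((e α : ℕ)))
        (fun α => by rw [hIe]; exact Finset.mem_image.mpr ⟨α, Finset.mem_univ _, rfl⟩)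
        (fun a b h => by exact_mod_cast he h)
      intro α
      exact Fin.val_injective (congrFun (e1.trans e2.symm) α)
    have hsg : ∀ β, s (κ β) = g β := by
      have e1 := Finset.orderEmbOfFin_unique hJ'card
        (f := fun β => ((s (κ β) : ℕ)))
        (fun β => Finset.mem_image.mpr ⟨κ β, Finset.orderEmbOfFin_mem _ _ _, rfl⟩)
        (fun a b h => by
          have : s (κ a) < s (κ b) := hs ((J.orderEmbOfFin hJ).strictMono h)
          exact_mod_cast this)
      have e2 := Finset.orderEmbOfFin_unique hJ'card
        (f := fun β => ((g β : ℕ)))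
        (fun β => by rw [hJg]; exact Finset.mem_image.mpr ⟨β, Finset.mem_univ _, rfl⟩)
        (fun a b h => by exact_mod_cast hg h)
      intro β
      exact Fin.val_injective (congrFun (e1.trans e2.symm) β)
    refine ⟨fun w => if h : w ∈ T.V1 then x ((T.V1.orderIsoOfFin hp).symm ⟨w, h⟩)
        else if h : w ∈ T.V2 then y ((T.V2.orderIsoOfFin hq).symm ⟨w, h⟩) else 0,
      fun w => if h : w ∈ T.V1 then ι ((T.V1.orderIsoOfFin hp).symm ⟨w, h⟩)
        else Classical.arbitrary _,
      fun w => if h : w ∈ T.V2 then κ ((T.V2.orderIsoOfFin hq).symm ⟨w, h⟩)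
        else Classical.arbitrary _, ?_, ?_, ?_, ?_, ?_, ?_, ?_⟩
    · intro w hw
      simp only [dif_pos hw]
      rw [hQA, hre]
      exact hx _
    · intro w hw
      have hw1 : w ∉ T.V1 := Finset.disjoint_right.mp T.disj hw
      simp only [dif_neg hw1, dif_pos hw]
      rw [hQB, hsg]
      exact hy _
    · intro w hw w' hw' hlt
      simp only [dif_pos hw, dif_pos hw']
      exact (I.orderEmbOfFin hI).strictMono
        ((T.V1.orderIsoOfFin hp).symm.strictMono (Subtype.mk_lt_mk.mpr hlt))
    · intro w hw w' hw' hlt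
      simp only [dif_pos hw, dif_pos hw']
      exact (J.orderEmbOfFin hJ).strictMono
        ((T.V2.orderIsoOfFin hq).symm.strictMono (Subtype.mk_lt_mk.mpr hlt))
    · intro w hw w' hw'
      have hw'1 : w' ∉ T.V1 := Finset.disjoint_right.mp T.disj hw'
      simp only [dif_pos hw, dif_neg hw'1, dif_pos hw']
      rw [hxy]
      show T.adj w w' = T.adj _ _
      rw [keyV1 w hw, keyV2 w' hw']
    · apply Finset.Subset.antisymm
      · intro i hi
        have : ∃ α, ι α = i := by
          have hr := Finset.range_orderEmbOfFin I hI
          have : i ∈ Set.range (I.orderEmbOfFin hI) := by rw [hr]; exact hi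
          exact this
        obtain ⟨α, rfl⟩ := this
        refine Finset.mem_image.mpr ⟨T.V1.orderEmbOfFin hp α,
          Finset.orderEmbOfFin_mem _ _ _, ?_⟩
        have hmem := Finset.orderEmbOfFin_mem T.V1 hp α
        simp only [dif_pos hmem]
        congr 1
        have : (⟨T.V1.orderEmbOfFin hp α, hmem⟩ : {z // z ∈ T.V1}) =
            T.V1.orderIsoOfFin hp α :=
          Subtype.ext (Finset.coe_orderIsoOfFin_apply T.V1 hp α).symm
        rw [this, OrderIso.symm_apply_apply]
      · intro z hz
        obtain ⟨w, hw, rfl⟩ := Finset.mem_image.mp hz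
        simp only [dif_pos hw]
        exact Finset.orderEmbOfFin_mem _ _ _
    · apply Finset.Subset.antisymm
      · intro j hj
        have : ∃ β, κ β = j := by
          have hr := Finset.range_orderEmbOfFin J hJ
          have : j ∈ Set.range (J.orderEmbOfFin hJ) := by rw [hr]; exact hj
          exact this
        obtain ⟨β, rfl⟩ := this
        refine Finset.mem_image.mpr ⟨T.V2.orderEmbOfFin hq β,
          Finset.orderEmbOfFin_mem _ _ _, ?_⟩
        have hmem := Finset.orderEmbOfFin_mem T.V2 hq β
        simp only [dif_pos hmem]
        congr 1
        have : (⟨T.V2.orderEmbOfFin hq β, hmem⟩ : {z // z ∈ T.V2}) =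
            T.V2.orderIsoOfFin hq β :=
          Subtype.ext (Finset.coe_orderIsoOfFin_apply T.V2 hq β).symm
        rw [this, OrderIso.symm_apply_apply]
      · intro z hz
        obtain ⟨w, hw, rfl⟩ := Finset.mem_image.mp hz
        simp only [dif_pos hw]
        exact Finset.orderEmbOfFin_mem _ _ _


open Finset in
theorem splitBip {C : Type} [Fintype C] [Nonempty C] (p q m : ℕ) :
    ∃ N : ℕ, ∀ c : Finset ℕ → Finset ℕ → C, ∀ A : Finset ℕ, N ≤ A.card →
      ∃ B ⊆ A, m ≤ B.card ∧ ∃ b : C, ∀ I J : Finset ℕ, I ⊆ B → J ⊆ B →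
        I.card = p → J.card = q → (∀ x ∈ I, ∀ y ∈ J, x < y) → c I J = b := by
  obtain ⟨N, hN⟩ := myRamsey (C := C) (p + q) m
  refine ⟨N, fun c A hA => ?_⟩
  obtain ⟨B, hBA, hBcard, b, hb⟩ := hN
    (fun S => c {x ∈ S | #{z ∈ S | z < x} < p} {x ∈ S | ¬ #{z ∈ S | z < x} < p}) A hA
  refine ⟨B, hBA, hBcard, b, ?_⟩
  intro I J hIB hJB hIcard hJcard hlt
  have hdisj : Disjoint I J := by
    rw [Finset.disjoint_left]
    intro x hxI hxJ
    exact absurd (hlt x hxI x hxJ) (lt_irrefl x)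
  set S := I ∪ J with hS
  have hSB : S ⊆ B := Finset.union_subset hIB hJB
  have hScard : S.card = p + q := by
    rw [hS, Finset.card_union_of_disjoint hdisj, hIcard, hJcard]
  have h1 : {x ∈ S | #{z ∈ S | z < x} < p} = I := by
    apply Finset.Subset.antisymm
    · intro x hx
      obtain ⟨hxS, hxp⟩ := Finset.mem_filter.mp hx
      rcases Finset.mem_union.mp hxS with h | h
      · exact h
      · exfalso
        have : I ⊆ {z ∈ S | z < x} := by
          intro z hz
          exact Finset.mem_filter.mpr ⟨Finset.mem_union_left _ hz, hlt z hz x h⟩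
        have := Finset.card_le_card this
        omega
    · intro x hx
      refine Finset.mem_filter.mpr ⟨Finset.mem_union_left _ hx, ?_⟩
      have hsub : {z ∈ S | z < x} ⊆ I.erase x := by
        intro z hz
        obtain ⟨hzS, hzx⟩ := Finset.mem_filter.mp hz
        rcases Finset.mem_union.mp hzS with h | h
        · exact Finset.mem_erase.mpr ⟨by omega, h⟩
        · exact absurd (hlt x hx z h) (by omega)
      have h2 := Finset.card_le_card hsub
      rw [Finset.card_erase_of_mem hx, hIcard] at h2
      have hp1 : 1 ≤ p := by
        rw [← hIcard]; exact Finset.card_pos.mpr ⟨x, hx⟩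
      omega
  have h2 : {x ∈ S | ¬ #{z ∈ S | z < x} < p} = J := by
    have : {x ∈ S | ¬ #{z ∈ S | z < x} < p} = S \ {x ∈ S | #{z ∈ S | z < x} < p} := by
      rw [Finset.sdiff_eq_filter]
      apply Finset.filter_congr
      intro x hxS
      simp [hxS]
    rw [this, h1, hS, Finset.union_sdiff_cancel_left hdisj]
  have := hb S hSB hScard
  rw [h1, h2] at this
  exact this

open Finset in
theorem multiBip {C : Type} [Fintype C] [Nonempty C] (L : List (ℕ × ℕ)) (m : ℕ) :
    ∃ N : ℕ, ∀ c : Finset ℕ → Finset ℕ → C, ∀ A : Finset ℕ, N ≤ A.card →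
      ∃ B ⊆ A, m ≤ B.card ∧ ∀ pq ∈ L, ∃ b : C, ∀ I J : Finset ℕ, I ⊆ B → J ⊆ B →
        I.card = pq.1 → J.card = pq.2 → (∀ x ∈ I, ∀ y ∈ J, x < y) → c I J = b := by
  induction L with
  | nil => exact ⟨m, fun c A hA => ⟨A, subset_rfl, hA, by simp⟩⟩
  | cons pq L ih =>
    obtain ⟨N', hN'⟩ := ih
    obtain ⟨N, hN⟩ := splitBip (C := C) pq.1 pq.2 N'
    refine ⟨N, fun c A hA => ?_⟩
    obtain ⟨B0, hB0A, hB0card, b0, hb0⟩ := hN c A hA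
    obtain ⟨B, hBB0, hBcard, hb⟩ := hN' c B0 hB0card
    refine ⟨B, hBB0.trans hB0A, hBcard, ?_⟩
    intro pq' hmem
    rcases List.mem_cons.mp hmem with rfl | h
    · exact ⟨b0, fun I J hI hJ h1 h2 h3 =>
        hb0 I J (hI.trans hBB0) (hJ.trans hBB0) h1 h2 h3⟩
    · exact hb pq' h


/-- Theorem 5.2 of the paper: for all `k, τ` there is `K` such that every parade of
length `(K, K)` has a sub-parade of length `(k, k)` that is `τ`-support-uniform. -/
theorem stmt7 (k τ : ℕ) :
    ∃ K : ℕ, ∀ (G : Bigraph) (P : Parade G K K),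
      ∃ (Q : Parade G k k) (r s : Fin k → Fin K), StrictMono r ∧ StrictMono s ∧
        (∀ i, Q.A i = P.A (r i)) ∧ (∀ i, Q.B i = P.B (s i)) ∧
        SupportUniform Q τ := by
  classical
  obtain ⟨N, hN⟩ := multiBip
    (C := ∀ p : Fin (τ+1), ∀ q : Fin (τ+1), (Fin (p:ℕ) → Fin (q:ℕ) → Bool) → Bool)
    ((List.range (τ+1)).flatMap fun p => (List.range (τ+1)).map fun q => (p, q)) (2*k)
  refine ⟨N, fun G P => ?_⟩
  obtain ⟨B, hBsub, hBcard, hhom⟩ := hN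
    (fun I J => fun p q M => decide (RealP P (p:ℕ) (q:ℕ) M I J))
    (Finset.range N) (by rw [Finset.card_range])
  obtain ⟨B', hB'B, hB'card⟩ := Finset.exists_subset_card_eq hBcard
  have hrb : ∀ i : Fin k, (i:ℕ) < 2*k := fun i => by have := i.isLt; omega
  have hsb : ∀ i : Fin k, k + (i:ℕ) < 2*k := fun i => by have := i.isLt; omega
  have hmemN : ∀ z ∈ B', z < N := fun z hz => Finset.mem_range.mp (hBsub (hB'B hz))
  set oi := B'.orderEmbOfFin hB'card with hoi
  set r : Fin k → Fin N :=
    fun i => ⟨oi ⟨i, hrb i⟩, hmemN _ (Finset.orderEmbOfFin_mem _ _ _)⟩ with hrdef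
  set s : Fin k → Fin N :=
    fun i => ⟨oi ⟨k + i, hsb i⟩, hmemN _ (Finset.orderEmbOfFin_mem _ _ _)⟩ with hsdef
  have hrmono : StrictMono r := fun a b h => by
    show (oi ⟨a, hrb a⟩ : ℕ) < oi ⟨b, hrb b⟩
    exact oi.strictMono (Fin.mk_lt_mk.mpr (by exact_mod_cast h))
  have hsmono : StrictMono s := fun a b h => by
    show (oi ⟨k + a, hsb a⟩ : ℕ) < oi ⟨k + b, hsb b⟩
    refine oi.strictMono (Fin.mk_lt_mk.mpr ?_)
    have : (a : ℕ) < b := h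
    omega
  have hrs : ∀ i j : Fin k, ((r i : ℕ)) < ((s j : ℕ)) := fun i j => by
    show (oi ⟨i, hrb i⟩ : ℕ) < oi ⟨k + j, hsb j⟩
    refine oi.strictMono (Fin.mk_lt_mk.mpr ?_)
    have := i.isLt
    omega
  have hrB : ∀ i, ((r i : ℕ)) ∈ B := fun i => hB'B (Finset.orderEmbOfFin_mem _ _ _)
  have hsB : ∀ i, ((s i : ℕ)) ∈ B := fun i => hB'B (Finset.orderEmbOfFin_mem _ _ _)
  set Q : Parade G k k :=
    { A := fun i => P.A (r i)
      B := fun j => P.B (s j)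
      A_sub := fun i => P.A_sub _
      B_sub := fun j => P.B_sub _
      A_ne := fun i => P.A_ne _
      B_ne := fun j => P.B_ne _
      A_disj := fun i i' h => P.A_disj _ _ (fun hc => h (hrmono.injective hc))
      B_disj := fun j j' h => P.B_disj _ _ (fun hc => h (hsmono.injective hc))
      A_card := fun i i' => P.A_card _ _
      B_card := fun j j' => P.B_card _ _ } with hQdef
  refine ⟨Q, r, s, hrmono, hsmono, fun i => rfl, fun j => rfl, ?_⟩
  intro T hT hτ
  by_cases hex : ∃ I J, InTrace Q T I J
  · right
    obtain ⟨I0, J0, h0⟩ := hex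
    haveI hkne : Nonempty (Fin k) := by
      obtain ⟨f, φ, ψ, -⟩ := h0
      exact ⟨φ 0⟩
    have hcard0 := intrace_card h0
    have hpq : T.V1.card + T.V2.card ≤ τ := by
      rw [← Finset.card_union_of_disjoint T.disj]
      exact hτ
    have hcardim : ∀ (I : Finset (Fin k)),
        (I.image fun i => ((r i : ℕ))).card = I.card := fun I =>
      Finset.card_image_of_injOn (fun a _ b _ h =>
        hrmono.injective (Fin.val_injective h))
    have hcardim' : ∀ (J : Finset (Fin k)),
        (J.image fun j => ((s j : ℕ))).card = J.card := fun J =>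
      Finset.card_image_of_injOn (fun a _ b _ h =>
        hsmono.injective (Fin.val_injective h))
    have hsubim : ∀ (I : Finset (Fin k)), (I.image fun i => ((r i : ℕ))) ⊆ B := by
      intro I z hz
      obtain ⟨i, _, rfl⟩ := Finset.mem_image.mp hz
      exact hrB i
    have hsubim' : ∀ (J : Finset (Fin k)), (J.image fun j => ((s j : ℕ))) ⊆ B := by
      intro J z hz
      obtain ⟨j, _, rfl⟩ := Finset.mem_image.mp hz
      exact hsB j
    have hcross : ∀ (I J : Finset (Fin k)), ∀ x ∈ (I.image fun i => ((r i : ℕ))),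
        ∀ y ∈ (J.image fun j => ((s j : ℕ))), x < y := by
      intro I J x hx y hy
      obtain ⟨i, _, rfl⟩ := Finset.mem_image.mp hx
      obtain ⟨j, _, rfl⟩ := Finset.mem_image.mp hy
      exact hrs i j
    have hmemL : ((T.V1.card, T.V2.card) : ℕ × ℕ) ∈
        (List.range (τ+1)).flatMap fun p => (List.range (τ+1)).map fun q => (p, q) :=
      List.mem_flatMap.mpr ⟨T.V1.card, List.mem_range.mpr (by omega),
        List.mem_map.mpr ⟨T.V2.card, List.mem_range.mpr (by omega), rfl⟩⟩
    obtain ⟨b, hb⟩ := hhom (T.V1.card, T.V2.card) hmemL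
    intro I J
    constructor
    · intro h; exact intrace_card h
    · rintro ⟨hIc, hJc⟩
      have h0R := (intrace_iff P r s hrmono hsmono Q (fun _ => rfl) (fun _ => rfl) T
        rfl rfl I0 J0 hcard0.1 hcard0.2).mp h0
      have hc0 := hb (I0.image fun i => ((r i : ℕ))) (J0.image fun j => ((s j : ℕ)))
        (hsubim I0) (hsubim' J0) ((hcardim I0).trans hcard0.1)
        ((hcardim' J0).trans hcard0.2) (hcross I0 J0)
      have hc1 := hb (I.image fun i => ((r i : ℕ))) (J.image fun j => ((s j : ℕ)))
        (hsubim I) (hsubim' J) ((hcardim I).trans hIc)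
        ((hcardim' J).trans hJc) (hcross I J)
      have hdec := congrFun (congrFun (congrFun (hc0.trans hc1.symm)
        (⟨T.V1.card, by omega⟩ : Fin (τ+1))) (⟨T.V2.card, by omega⟩ : Fin (τ+1)))
        (fun α β => T.adj (T.V1.orderEmbOfFin rfl α) (T.V2.orderEmbOfFin rfl β))
      rw [decide_eq_decide] at hdec
      exact (intrace_iff P r s hrmono hsmono Q (fun _ => rfl) (fun _ => rfl) T
        rfl rfl I J hIc hJc).mpr (hdec.mp h0R)
  · left
    intro I J h
    exact hex ⟨I, J, h⟩
end

section
/- Let K, ℓ, t > 0 be integers and 0 < κ ≤ 1/2. Let r = ⌈t/κ⌉ and L = rℓ. Let P = (A1,…,AK; B1,…,BL) be a parade of width (W1, W2) in a bigraph G. Suppose there do not exist indices 1 < q0 < ⋯ < q_{2t} ≤ L and a set X ⊆ A1 ∪ ⋯ ∪ AK such that X 2κ-covers B_{q_t} and X κ-misses B_{q_j} for all j ∈ {0,…,2t} \ {t}. For 1 ≤ j ≤ ℓ let C_j be the union of the B_i with r(j−1) < i ≤ rj. Then the parade (A1,…,AK; C1,…,C_ℓ) is 2κ-bottom-concave. 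-/
/-- The `j`-th grouped block `C_j`: the union of the `B_i` with `r(j−1) < i ≤ rj`
(0-indexed: `r·j ≤ i < r·(j+1)`). -/
def Cblk {G : Bigraph} {K r ℓ : ℕ} (P : Parade G K (r * ℓ)) (j : Fin ℓ) : Finset ℕ :=
  (Finset.range r).attach.biUnion fun i =>
    P.B ⟨r * j.val + i.val, by
      have hi : i.val < r := Finset.mem_range.mp i.property
      have hj : j.val + 1 ≤ ℓ := j.isLt
      calc r * j.val + i.val < r * j.val + r := Nat.add_lt_add_left hi _
        _ = r * (j.val + 1) := by ring
        _ ≤ r * ℓ := Nat.mul_le_mul_left r hj⟩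


private lemma aux_exists_ge {s : Finset ℕ} (hs : s.Nonempty) (f : ℕ → ℕ) (c : ℝ)
    (h : c * s.card ≤ ∑ i ∈ s, (f i : ℝ)) : ∃ i ∈ s, c ≤ (f i : ℝ) := by
  by_contra hc
  push_neg at hc
  have h2 : ∑ i ∈ s, (f i : ℝ) < ∑ _i ∈ s, c := Finset.sum_lt_sum_of_nonempty hs hc
  rw [Finset.sum_const, nsmul_eq_mul] at h2
  nlinarith

private lemma aux_count {s : Finset ℕ} (f : ℕ → ℕ) (b t : ℕ) (κ : ℝ)
    (hb0 : (0:ℝ) < b) (hκ0 : 0 < κ)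
    (hfb : ∀ i ∈ s, (f i : ℝ) ≤ b)
    (hsum : 2 * κ * (s.card * b) ≤ ∑ i ∈ s, (f i : ℝ))
    (hts : (t : ℝ) ≤ κ * s.card) (hcard : t + 1 ≤ s.card) :
    t + 1 ≤ (s.filter fun i => κ * b ≤ (f i : ℝ)).card := by
  classical
  set S := s.filter (fun i => κ * b ≤ (f i : ℝ)) with hSdef
  have hSsub : S ⊆ s := Finset.filter_subset _ _
  by_cases hne : (s \ S).Nonempty
  · have hsplit : ∑ i ∈ s \ S, (f i:ℝ) + ∑ i ∈ S, (f i:ℝ) = ∑ i ∈ s, (f i:ℝ) :=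
      Finset.sum_sdiff hSsub
    have h1 : ∑ i ∈ S, (f i:ℝ) ≤ S.card * b := by
      calc ∑ i ∈ S, (f i:ℝ) ≤ ∑ _i ∈ S, (b:ℝ) :=
            Finset.sum_le_sum fun i hi => hfb i (hSsub hi)
        _ = S.card * b := by rw [Finset.sum_const, nsmul_eq_mul]
    have h2 : ∑ i ∈ s \ S, (f i:ℝ) < ((s \ S).card : ℝ) * (κ * b) := by
      have hlt : ∀ i ∈ s \ S, (f i : ℝ) < κ * b := by
        intro i hi
        have hi' := Finset.mem_sdiff.mp hi
        have hnot : ¬ (κ * b ≤ (f i:ℝ)) := fun hle =>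
          hi'.2 (Finset.mem_filter.mpr ⟨hi'.1, hle⟩)
        linarith
      have := Finset.sum_lt_sum_of_nonempty hne hlt
      rwa [Finset.sum_const, nsmul_eq_mul] at this
    have hcards : ((s \ S).card : ℝ) ≤ s.card :=
      Nat.cast_le.mpr (Finset.card_le_card Finset.sdiff_subset)
    have hκb : 0 < κ * b := mul_pos hκ0 hb0
    have h3 : κ * s.card * b < S.card * b := by nlinarith
    have h4 : κ * (s.card : ℝ) < S.card := lt_of_mul_lt_mul_right h3 hb0.le
    have h5 : (t : ℝ) < S.card := lt_of_le_of_lt hts h4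
    have : t < S.card := by exact_mod_cast h5
    omega
  · have hss : s ⊆ S := by
      intro i hi
      by_contra hiS
      exact hne ⟨i, Finset.mem_sdiff.mpr ⟨hi, hiS⟩⟩
    have := Finset.card_le_card hss
    omega

/-- Theorem 5.4 of the paper (first part): under the hypothesis that there is no
set `X` of top-side vertices `2κ`-covering some block `B_{q_t}` while `κ`-missing
`2t` blocks around it, the grouped parade `(A_1,…,A_K; C_1,…,C_ℓ)` is
`2κ`-bottom-concave. -/
theorem stmt10 (G : Bigraph) (K ℓ t r : ℕ) (hK : 0 < K) (hℓ : 0 < ℓ) (ht : 0 < t)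
    (κ : ℝ) (hκ0 : 0 < κ) (hκ : κ ≤ 1 / 2) (hr : r = ⌈(t : ℝ) / κ⌉₊)
    (P : Parade G K (r * ℓ))
    (hyp : ¬ ∃ (q : Fin (2 * t + 1) → Fin (r * ℓ)) (X : Finset ℕ),
        StrictMono q ∧ 1 ≤ (q ⟨0, by omega⟩).val ∧
        X ⊆ Finset.univ.biUnion (fun i : Fin K => P.A i) ∧
        Covers G (2 * κ) X (P.B (q ⟨t, by omega⟩)) ∧
        ∀ j : Fin (2 * t + 1), j.val ≠ t → Misses G κ X (P.B (q j))) :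
    ∀ X ⊆ Finset.univ.biUnion (fun i : Fin K => P.A i),
      ∀ h1 h2 h3 : Fin ℓ, h1 < h2 → h2 < h3 →
        ¬ (Covers G (2 * κ) X (Cblk P h2) ∧ Misses G (2 * κ) X (Cblk P h1) ∧
            Misses G (2 * κ) X (Cblk P h3)) := by
  classical
  intro X hX h1 h2 h3 h12 h23 hcon
  obtain ⟨hcov, hm1, hm3⟩ := hcon
  -- basic facts about r
  have hle : (t:ℝ)/κ ≤ r := by rw [hr]; exact Nat.le_ceil _
  have hrt' : (t:ℝ) ≤ κ * r := by
    rw [div_le_iff₀ hκ0] at hle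
    nlinarith
  have ht1 : (1:ℝ) ≤ t := by exact_mod_cast ht
  have hr2t : 2 * t ≤ r := by
    have h2t : ((2*t:ℕ):ℝ) ≤ (r:ℝ) := by
      push_cast
      nlinarith
    exact_mod_cast h2t
  have hrpos : 0 < r := by omega
  have hrℓ : 0 < r * ℓ := Nat.mul_pos hrpos hℓ
  set b := (P.B ⟨0, hrℓ⟩).card with hbdef
  have hb : ∀ k, (P.B k).card = b := fun k => P.B_card k _
  have hb1 : 1 ≤ b := Finset.card_pos.mpr (P.B_ne _)
  have hb0 : (0:ℝ) < b := by exact_mod_cast hb1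
  -- index function
  have hidx_lt : ∀ (h : Fin ℓ) (i : ℕ), r * h.val + i % r < r * ℓ := by
    intro h i
    have hmod : i % r < r := Nat.mod_lt _ hrpos
    have h2' : h.val + 1 ≤ ℓ := h.isLt
    calc r * h.val + i % r < r * h.val + r := by omega
      _ = r * (h.val + 1) := by ring
      _ ≤ r * ℓ := Nat.mul_le_mul_left r h2'
  set idx : Fin ℓ → ℕ → Fin (r * ℓ) := fun h i => ⟨r * h.val + i % r, hidx_lt h i⟩
    with hidxdef
  have hidx_val : ∀ (h : Fin ℓ) (i : ℕ), i < r → (idx h i).val = r * h.val + i := by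
    intro h i hi
    simp [hidxdef, Nat.mod_eq_of_lt hi]
  have hidx_cross : ∀ (h h' : Fin ℓ) (i i' : ℕ), h < h' → idx h i < idx h' i' := by
    intro h h' i i' hhh
    have h1' : (idx h i).val < r * (h.val + 1) := by
      have hmod : i % r < r := Nat.mod_lt _ hrpos
      have hms : r * (h.val + 1) = r * h.val + r := Nat.mul_succ r h.val
      simp only [hidxdef]
      omega
    have h2' : r * h'.val ≤ (idx h' i').val := by simp only [hidxdef]; omega
    have h3' : r * (h.val + 1) ≤ r * h'.val := Nat.mul_le_mul_left r hhh
    exact Fin.lt_def.mpr (by omega)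
  have hidx_same : ∀ (h : Fin ℓ) (i i' : ℕ), i < r → i' < r → i < i' →
      idx h i < idx h i' := by
    intro h i i' hi hi' hii
    refine Fin.lt_def.mpr ?_
    rw [hidx_val h i hi, hidx_val h i' hi']
    omega
  -- decomposition of Cblk
  have hdecomp : ∀ (h : Fin ℓ) (p : ℕ → Prop) (inst : DecidablePred p),
      (@Finset.filter _ p inst (Cblk P h)).card
        = ∑ i ∈ Finset.range r, (@Finset.filter _ p inst (P.B (idx h i))).card := by
    intro h p inst
    rw [Cblk, Finset.filter_biUnion, Finset.card_biUnion]
    · rw [← Finset.sum_attach (Finset.range r)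
        (fun i => (@Finset.filter _ p inst (P.B (idx h i))).card)]
      refine Finset.sum_congr rfl ?_
      intro i _
      have hival : i.val < r := Finset.mem_range.mp i.property
      refine congrArg (fun k => (@Finset.filter _ p inst (P.B k)).card) (Fin.ext ?_)
      simp [hidxdef, Nat.mod_eq_of_lt hival]
    · intro i _ i' _ hne
      refine Disjoint.mono (Finset.filter_subset _ _) (Finset.filter_subset _ _) ?_
      apply P.B_disj
      intro hEq
      apply hne
      have hv := congrArg Fin.val hEq
      simp only at hv
      exact Subtype.ext (by omega)
  have hCcard : ∀ h : Fin ℓ, (Cblk P h).card = r * b := by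
    intro h
    rw [Cblk, Finset.card_biUnion]
    · rw [Finset.sum_congr rfl (fun i _ => hb _)]
      simp [mul_comm]
    · intro i _ i' _ hne
      apply P.B_disj
      intro hEq
      apply hne
      have hv := congrArg Fin.val hEq
      simp only at hv
      exact Subtype.ext (by omega)
  -- the covered block inside C_{h2}
  unfold Covers at hcov
  unfold Misses at hm1 hm3
  rw [hCcard h2, hdecomp h2 _ _] at hcov
  push_cast at hcov
  have hrne : (Finset.range r).Nonempty := ⟨0, Finset.mem_range.mpr hrpos⟩
  obtain ⟨i2, hi2r, hi2⟩ := aux_exists_ge hrne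
    (fun i => ((P.B (idx h2 i)).filter fun y => ∃ x ∈ X, G.adjS x y = true).card)
    (2 * κ * b)
    (by
      rw [Finset.card_range]
      calc (2 * κ * (b:ℝ)) * r = 2 * κ * ((r:ℝ) * b) := by ring
        _ ≤ _ := hcov)
  have hi2r' : i2 < r := Finset.mem_range.mp hi2r
  -- the many missed blocks inside C_{h1} and C_{h3}
  have hmiss : ∀ hh : Fin ℓ, Misses G (2 * κ) X (Cblk P hh) →
      t + 1 ≤ ((Finset.range r).filter fun i =>
        κ * (b:ℝ) ≤ (((P.B (idx hh i)).filter
          fun y => ∀ x ∈ X, ¬ G.adjS x y = true).card : ℝ)).card := by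
    intro hh hm
    unfold Misses at hm
    rw [hCcard hh, hdecomp hh _ _] at hm
    push_cast at hm
    refine aux_count _ b t κ hb0 hκ0 ?_ ?_ ?_ ?_
    · intro i _
      have := Finset.card_le_card (Finset.filter_subset
        (fun y => ∀ x ∈ X, ¬ G.adjS x y = true) (P.B (idx hh i)))
      rw [hb (idx hh i)] at this
      exact_mod_cast this
    · rw [Finset.card_range]
      exact hm
    · rw [Finset.card_range]
      exact hrt'
    · rw [Finset.card_range]
      omega
  have hS1 := hmiss h1 hm1
  have hS3 := hmiss h3 hm3
  set S1 := ((Finset.range r).filter fun i =>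
    κ * (b:ℝ) ≤ (((P.B (idx h1 i)).filter
      fun y => ∀ x ∈ X, ¬ G.adjS x y = true).card : ℝ)) with hS1def
  set S3 := ((Finset.range r).filter fun i =>
    κ * (b:ℝ) ≤ (((P.B (idx h3 i)).filter
      fun y => ∀ x ∈ X, ¬ G.adjS x y = true).card : ℝ)) with hS3def
  have hS1e : t ≤ (S1.erase 0).card := by
    by_cases h0 : 0 ∈ S1
    · rw [Finset.card_erase_of_mem h0]; omega
    · rw [Finset.erase_eq_of_notMem h0]; omega
  obtain ⟨T1, hT1sub, hT1card⟩ := Finset.exists_subset_card_eq hS1e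
  obtain ⟨T3, hT3sub, hT3card⟩ := Finset.exists_subset_card_eq
    (show t ≤ S3.card by omega)
  set e1 := T1.orderEmbOfFin hT1card with he1def
  set e3 := T3.orderEmbOfFin hT3card with he3def
  have he1S : ∀ a : Fin t, e1 a ∈ S1 :=
    fun a => Finset.mem_of_mem_erase (hT1sub (T1.orderEmbOfFin_mem hT1card a))
  have he1ne : ∀ a : Fin t, e1 a ≠ 0 :=
    fun a => Finset.ne_of_mem_erase (hT1sub (T1.orderEmbOfFin_mem hT1card a))
  have he3S : ∀ a : Fin t, e3 a ∈ S3 :=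
    fun a => hT3sub (T3.orderEmbOfFin_mem hT3card a)
  have he1r : ∀ a : Fin t, e1 a < r := fun a =>
    Finset.mem_range.mp (Finset.mem_filter.mp (he1S a)).1
  have he3r : ∀ a : Fin t, e3 a < r := fun a =>
    Finset.mem_range.mp (Finset.mem_filter.mp (he3S a)).1
  have hq3 : ∀ j : Fin (2*t+1), j.val - (t+1) < t := fun j => by
    have := j.isLt; omega
  set q : Fin (2*t+1) → Fin (r * ℓ) := fun j =>
    if hjt : j.val < t then idx h1 (e1 ⟨j.val, hjt⟩)
    else if j.val = t then idx h2 i2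
    else idx h3 (e3 ⟨j.val - (t+1), hq3 j⟩) with hqdef
  apply hyp
  refine ⟨q, X, ?_, ?_, hX, ?_, ?_⟩
  · -- StrictMono
    intro j j' hjj'
    have hjj : j.val < j'.val := hjj'
    rw [hqdef]
    dsimp only
    split_ifs with ha hb' hc hd he hf hg
    · exact hidx_same h1 _ _ (he1r _) (he1r _)
        (e1.strictMono (show (⟨j.val, ha⟩ : Fin t) < ⟨j'.val, hb'⟩ from hjj))
    · exact hidx_cross h1 h2 _ _ h12
    · exact hidx_cross h1 h3 _ _ (lt_trans h12 h23)
    · exact absurd hjj (by omega)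
    · exact absurd hjj (by omega)
    · exact hidx_cross h2 h3 _ _ h23
    · exact absurd hjj (by omega)
    · exact absurd hjj (by omega)
    · exact hidx_same h3 _ _ (he3r _) (he3r _)
        (e3.strictMono (show (⟨j.val - (t+1), hq3 j⟩ : Fin t) < ⟨j'.val - (t+1), hq3 j'⟩
          from by simp only [Fin.mk_lt_mk]; omega))
  · -- 1 ≤ (q 0).val
    rw [hqdef]
    dsimp only
    rw [dif_pos (show (0:ℕ) < t from ht)]
    have h1' := he1r ⟨0, ht⟩
    have h2' := he1ne ⟨0, ht⟩
    rw [hidx_val h1 _ h1']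
    omega
  · -- Covers at q t
    rw [hqdef]
    dsimp only
    rw [dif_neg (lt_irrefl t), if_pos rfl]
    unfold Covers
    rw [hb (idx h2 i2)]
    exact hi2
  · -- Misses elsewhere
    intro j hjne
    rw [hqdef]
    dsimp only
    by_cases hjt : j.val < t
    · rw [dif_pos hjt]
      have := (Finset.mem_filter.mp (he1S ⟨j.val, hjt⟩)).2
      unfold Misses
      rw [hb (idx h1 (e1 ⟨j.val, hjt⟩))]
      exact this
    · rw [dif_neg hjt, if_neg hjne]
      have := (Finset.mem_filter.mp (he3S ⟨j.val - (t+1), hq3 j⟩)).2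
      unfold Misses
      rw [hb (idx h3 (e3 ⟨j.val - (t+1), hq3 j⟩))]
      exact this
end

section
/- Let 0 ≤ λ ≤ 1 and let C1, …, C_m be disjoint finite nonempty vertex sets in a bigraph on the V2 side, all of the same size, and let X be a vertex set on the V1 side. Suppose that for all h1 < h2 < h3 there is no occurrence of X λ-covering C_{h2} while λ-missing C_{h1} and C_{h3} (concavity), and suppose X λ-covers each of C1, …, C_m, where λ ≤ 1/2. Then the set of indices j such that X λ-misses C_j (the 'pits' of X) has cardinality at most 2, and if it has cardinality 2 then the two pits are consecutive integers. -/
/-- If `X` `λ`-covers every block `C_j` and the concavity condition holds, then `X`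
has at most two pits, and if there are two pits they are consecutive. -/
theorem stmt11 (G : Bigraph) (m : ℕ) (lam : ℝ) (hlam0 : 0 ≤ lam) (hlam : lam ≤ 1 / 2)
    (C : Fin m → Finset ℕ) (X : Finset ℕ) (hX : X ⊆ G.V1) (hC : ∀ j, C j ⊆ G.V2)
    (hne : ∀ j, (C j).Nonempty) (hcard : ∀ j j', (C j).card = (C j').card)
    (hdisj : ∀ j j', j ≠ j' → Disjoint (C j) (C j'))
    (hconc : ∀ h1 h2 h3 : Fin m, h1 < h2 → h2 < h3 →
        ¬ (Covers G lam X (C h2) ∧ Misses G lam X (C h1) ∧ Misses G lam X (C h3)))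
    (hcov : ∀ j, Covers G lam X (C j)) :
    Nat.card {j : Fin m // Misses G lam X (C j)} ≤ 2 ∧
      ∀ j1 j2 : Fin m, Misses G lam X (C j1) → Misses G lam X (C j2) → j1 < j2 →
        (j2 : ℕ) = (j1 : ℕ) + 1 := by
  classical
  have key : ∀ j1 j2 : Fin m, Misses G lam X (C j1) → Misses G lam X (C j2) → j1 < j2 →
      (j2 : ℕ) = (j1 : ℕ) + 1 := by
    intro j1 j2 h1 h2 hlt
    by_contra hne'
    have hmid : (j1 : ℕ) + 1 < (j2 : ℕ) := by
      have := Fin.lt_def.mp hlt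
      omega
    have hj2m : (j1 : ℕ) + 1 < m := lt_trans hmid j2.isLt
    exact hconc j1 ⟨(j1 : ℕ) + 1, hj2m⟩ j2 (by simp [Fin.lt_def])
      (by simp [Fin.lt_def, hmid]) ⟨hcov _, h1, h2⟩
  refine ⟨?_, key⟩
  have hcardeq : Nat.card {j : Fin m // Misses G lam X (C j)} =
      (Finset.univ.filter fun j => Misses G lam X (C j)).card := by
    rw [Nat.card_eq_fintype_card, Fintype.card_subtype]
  rw [hcardeq]
  by_contra hgt
  push_neg at hgt
  obtain ⟨a, ha, b, hb, c, hc, hab, hac, hbc⟩ := Finset.two_lt_card.mp hgt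
  simp only [Finset.mem_filter] at ha hb hc
  have pair : ∀ x y : Fin m, Misses G lam X (C x) → Misses G lam X (C y) → x ≠ y →
      (y : ℕ) = (x : ℕ) + 1 ∨ (x : ℕ) = (y : ℕ) + 1 := by
    intro x y hx hy hxy
    rcases lt_or_gt_of_ne hxy with h | h
    · exact Or.inl (key x y hx hy h)
    · exact Or.inr (key y x hy hx h)
  have h1 := pair a b ha.2 hb.2 hab
  have h2 := pair a c ha.2 hc.2 hac
  have h3 := pair b c hb.2 hc.2 hbc
  rcases h1 with h1 | h1 <;> rcases h2 with h2 | h2 <;> rcases h3 with h3 | h3 <;> omega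
end
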